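/- arXiv:1601.06826 — 4 statements merged into one kernel-verified Lean document; each statement's English description precedes it below -/
import Mathlib

section
/- Let ρ and σ be density matrices (positive semidefinite, unit trace) with the support of ρ contained in the support of σ. Then for any c > 0, the quantum relative entropy satisfies D(ρ‖σ) ≤ (1/c)·(Tr(ρ^{1+c} σ^{-c}) − 1), where σ^{-c} is taken on the support of σ. -/
open Matrix
open scoped ComplexOrder

variable {d : Type*} [Fintype d] [DecidableEq d]

open Classical in
/-- Functional calculus for Hermitian matrices: apply `f` to the eigenvalues.
Returns `0` if the matrix is not Hermitian. -/
noncomputable def mfun (f : ℝ → ℝ) (A : Matrix d d ℂ) : Matrix d d ℂ :=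
  if hA : A.IsHermitian then
    (hA.eigenvectorUnitary : Matrix d d ℂ) *
      Matrix.diagonal (fun i => (f (hA.eigenvalues i) : ℂ)) *
      star (hA.eigenvectorUnitary : Matrix d d ℂ)
  else 0

/-- Matrix logarithm on the support (eigenvalues `≤ 0` are mapped to `0`). -/
noncomputable def logm (A : Matrix d d ℂ) : Matrix d d ℂ :=
  mfun (fun x => if x ≤ 0 then 0 else Real.log x) A

/-- Matrix real power on the support (eigenvalues `≤ 0` are mapped to `0`). -/
noncomputable def powm (A : Matrix d d ℂ) (p : ℝ) : Matrix d d ℂ :=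
  mfun (fun x => if x ≤ 0 then 0 else x ^ p) A

/-- Quantum relative entropy `D(ρ‖σ) = Tr(ρ (log ρ − log σ))` (natural log). -/
noncomputable def qRelEnt (ρ σ : Matrix d d ℂ) : ℝ :=
  ((ρ * (logm ρ - logm σ)).trace).re

/-- The support of `ρ` is contained in the support of `σ` (kernel containment,
equivalent to range containment for Hermitian matrices). -/
def SuppSubset (ρ σ : Matrix d d ℂ) : Prop :=
  ∀ v : d → ℂ, σ.mulVec v = 0 → ρ.mulVec v = 0

/-- Trace norm of a Hermitian matrix: `Tr |A|`. -/
noncomputable def traceNorm (A : Matrix d d ℂ) : ℝ :=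
  ((mfun (fun x => |x|) A).trace).re

/- ### Auxiliary lemmas -/

lemma key_scalar {p q c : ℝ} (hp : 0 < p) (hq : 0 < q) (hc : 0 < c) :
    p * (Real.log p - Real.log q) ≤ (1/c) * (p ^ (1+c) * q ^ (-c) - p) := by
  set t := p / q with ht
  have htpos : 0 < t := div_pos hp hq
  have h1 : Real.log (t ^ c) ≤ t ^ c - 1 :=
    Real.log_le_sub_one_of_pos (Real.rpow_pos_of_pos htpos c)
  rw [Real.log_rpow htpos] at h1
  have hlog : Real.log t ≤ (t ^ c - 1) / c := by
    rw [le_div_iff₀ hc]; linarith [h1]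
  have hrw : p ^ (1+c) * q ^ (-c) = p * t ^ c := by
    rw [Real.rpow_add hp, Real.rpow_one, Real.rpow_neg hq.le, ht,
      Real.div_rpow hp.le hq.le]
    field_simp
  rw [hrw, ← Real.log_div hp.ne' hq.ne', ← ht]
  have := mul_le_mul_of_nonneg_left hlog hp.le
  rw [div_eq_mul_inv] at this ⊢
  nlinarith

lemma key_term (c p q w : ℝ) (hc : 0 < c) (hp : 0 ≤ p) (hq : 0 ≤ q) (hw : 0 ≤ w)
    (hz : 0 < p → q = 0 → w = 0) :
    p * (if p ≤ 0 then 0 else Real.log p) * w - p * (if q ≤ 0 then 0 else Real.log q) * w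
      ≤ 1/c * ((if p ≤ 0 then (0:ℝ) else p ^ (1+c)) * (if q ≤ 0 then (0:ℝ) else q ^ (-c)) * w
          - p * w) := by
  rcases eq_or_lt_of_le hp with hp0 | hp0
  · simp [← hp0]
  · rw [if_neg (not_le.2 hp0), if_neg (not_le.2 hp0)]
    rcases eq_or_lt_of_le hq with hq0 | hq0
    · rw [hz hp0 hq0.symm]
      simp
    · rw [if_neg (not_le.2 hq0), if_neg (not_le.2 hq0)]
      have h := key_scalar hp0 hq0 hc
      nlinarith [mul_le_mul_of_nonneg_right h hw]

lemma trace_diag_conj (a b : d → ℂ) (M : Matrix d d ℂ) :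
    (Matrix.diagonal a * M * Matrix.diagonal b * star M).trace
      = ∑ i, ∑ j, a i * b j * (M i j * star (M i j)) := by
  have hentry : ∀ i j, (Matrix.diagonal a * M * Matrix.diagonal b) i j = a i * M i j * b j := by
    intro i j
    rw [Matrix.mul_diagonal, Matrix.diagonal_mul]
  simp only [Matrix.trace, Matrix.diag, Matrix.mul_apply, hentry,
    Matrix.star_eq_conjTranspose, Matrix.conjTranspose_apply]
  exact Finset.sum_congr rfl fun i _ => Finset.sum_congr rfl fun j _ => by ring

lemma mfun_eq (f : ℝ → ℝ) {A : Matrix d d ℂ} (hA : A.IsHermitian) :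
    mfun f A = (hA.eigenvectorUnitary : Matrix d d ℂ) *
      Matrix.diagonal (fun i => (f (hA.eigenvalues i) : ℂ)) *
      star (hA.eigenvectorUnitary : Matrix d d ℂ) := by
  rw [mfun, dif_pos hA]

lemma mfun_id {A : Matrix d d ℂ} (hA : A.IsHermitian) : mfun (fun x => x) A = A := by
  rw [mfun_eq _ hA]
  conv_rhs => rw [hA.spectral_theorem]
  rfl

lemma mfun_mul_mfun (f g : ℝ → ℝ) {A : Matrix d d ℂ} (hA : A.IsHermitian) :
    mfun f A * mfun g A = mfun (fun x => f x * g x) A := by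
  set U := (hA.eigenvectorUnitary : Matrix d d ℂ) with hUdef
  have hU : star U * U = 1 := Matrix.mem_unitaryGroup_iff'.mp hA.eigenvectorUnitary.2
  rw [mfun_eq f hA, mfun_eq g hA, mfun_eq _ hA]
  have hd : (Matrix.diagonal fun i => ((f (hA.eigenvalues i) : ℂ)))
      * (Matrix.diagonal fun i => ((g (hA.eigenvalues i) : ℂ)))
      = Matrix.diagonal fun i => ((f (hA.eigenvalues i) * g (hA.eigenvalues i) : ℝ) : ℂ) := by
    rw [Matrix.diagonal_mul_diagonal]
    push_cast
    rfl
  simp only [Matrix.mul_assoc]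
  rw [← Matrix.mul_assoc (star U) U, hU, Matrix.one_mul,
    ← Matrix.mul_assoc _ _ (star U), ← Matrix.mul_assoc, hd, Matrix.mul_assoc]

lemma trace_mfun (f : ℝ → ℝ) {A : Matrix d d ℂ} (hA : A.IsHermitian) :
    (mfun f A).trace = ((∑ i, f (hA.eigenvalues i) : ℝ) : ℂ) := by
  have hU : star (hA.eigenvectorUnitary : Matrix d d ℂ) *
      (hA.eigenvectorUnitary : Matrix d d ℂ) = 1 :=
    Matrix.mem_unitaryGroup_iff'.mp hA.eigenvectorUnitary.2
  rw [mfun_eq _ hA, Matrix.trace_mul_cycle, hU, Matrix.one_mul, Matrix.trace_diagonal]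
  push_cast
  rfl

lemma trace_mfun_mul_mfun (f g : ℝ → ℝ) {A B : Matrix d d ℂ}
    (hA : A.IsHermitian) (hB : B.IsHermitian) :
    (mfun f A * mfun g B).trace
      = ((∑ i, ∑ j, f (hA.eigenvalues i) * g (hB.eigenvalues j) *
          Complex.normSq ((star (hA.eigenvectorUnitary : Matrix d d ℂ) *
            (hB.eigenvectorUnitary : Matrix d d ℂ)) i j) : ℝ) : ℂ) := by
  set U := (hA.eigenvectorUnitary : Matrix d d ℂ) with hUdef
  set V := (hB.eigenvectorUnitary : Matrix d d ℂ) with hVdef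
  have hU : star U * U = 1 := Matrix.mem_unitaryGroup_iff'.mp hA.eigenvectorUnitary.2
  have hU' : U * star U = 1 := Matrix.mem_unitaryGroup_iff.mp hA.eigenvectorUnitary.2
  set M := star U * V with hMdef
  have hstarM : star M = star V * U := by rw [hMdef]; simp [Matrix.star_mul]
  have hprod : mfun f A * mfun g B
      = U * (Matrix.diagonal (fun i => (f (hA.eigenvalues i) : ℂ)) * M *
          Matrix.diagonal (fun j => (g (hB.eigenvalues j) : ℂ)) * star M) * star U := by
    rw [mfun_eq _ hA, mfun_eq _ hB, hstarM, hMdef]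
    simp only [Matrix.mul_assoc]
    rw [hU', Matrix.mul_one]
  rw [hprod, Matrix.trace_mul_cycle, ← Matrix.mul_assoc, hU, Matrix.one_mul, trace_diag_conj]
  push_cast
  refine Finset.sum_congr rfl fun i _ => Finset.sum_congr rfl fun j _ => ?_
  rw [← Complex.mul_conj]
  rfl


/-- For density matrices `ρ`, `σ` with `supp(ρ) ⊆ supp(σ)` and any `c > 0`,
`D(ρ‖σ) ≤ (1/c)·(Tr(ρ^{1+c} σ^{-c}) − 1)`, where `σ^{-c}` is taken on the support of `σ`. -/
theorem qRelEnt_le_ruskai_upper (ρ σ : Matrix d d ℂ)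
    (hρ : ρ.PosSemidef) (hρ1 : ρ.trace = 1)
    (hσ : σ.PosSemidef) (hσ1 : σ.trace = 1)
    (hsupp : SuppSubset ρ σ) (c : ℝ) (hc : 0 < c) :
    qRelEnt ρ σ ≤ (1 / c) * (((powm ρ (1 + c) * powm σ (-c)).trace).re - 1) := by
  have hρH : ρ.IsHermitian := hρ.1
  have hσH : σ.IsHermitian := hσ.1
  set U := (hρH.eigenvectorUnitary : Matrix d d ℂ) with hUdef
  set V := (hσH.eigenvectorUnitary : Matrix d d ℂ) with hVdef
  set M := star U * V with hMdef
  set p : d → ℝ := hρH.eigenvalues with hpdef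
  set q : d → ℝ := hσH.eigenvalues with hqdef
  set w : d → d → ℝ := fun i j => Complex.normSq (M i j) with hwdef
  have hU : star U * U = 1 := Matrix.mem_unitaryGroup_iff'.mp hρH.eigenvectorUnitary.2
  have hV : V * star V = 1 := Matrix.mem_unitaryGroup_iff.mp hσH.eigenvectorUnitary.2
  have hV' : star V * V = 1 := Matrix.mem_unitaryGroup_iff'.mp hσH.eigenvectorUnitary.2
  have hpnn : ∀ i, 0 ≤ p i := hρ.eigenvalues_nonneg
  have hqnn : ∀ j, 0 ≤ q j := hσ.eigenvalues_nonneg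
  have hwnn : ∀ i j, 0 ≤ w i j := fun i j => Complex.normSq_nonneg _
  -- row sums of |M|² are 1
  have hMM : M * star M = 1 := by
    have hstarM : star M = star V * U := by rw [hMdef]; simp [Matrix.star_mul]
    rw [hMdef, hstarM, Matrix.mul_assoc, ← Matrix.mul_assoc V, hV, Matrix.one_mul, hU]
  have hrow : ∀ i, ∑ j, w i j = 1 := by
    intro i
    have h1 : (M * star M) i i = 1 := by rw [hMM, Matrix.one_apply_eq]
    rw [Matrix.mul_apply] at h1
    have h2 : ∑ j, M i j * star M j i = ((∑ j, w i j : ℝ) : ℂ) := by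
      push_cast
      refine Finset.sum_congr rfl fun j _ => ?_
      rw [Matrix.star_eq_conjTranspose, Matrix.conjTranspose_apply, ← Complex.mul_conj]
      rfl
    rw [h2] at h1
    exact_mod_cast h1
  -- sum of eigenvalues of ρ is 1
  have hsum_p : ∑ i, p i = 1 := by
    have := trace_mfun (fun x => x) hρH
    rw [mfun_id hρH, hρ1] at this
    exact_mod_cast this.symm
  -- support condition: p i > 0 and q j = 0 forces M i j = 0
  have hzero : ∀ i j, 0 < p i → q j = 0 → w i j = 0 := by
    intro i j hpi hqj
    set v : d → ℂ := fun k => V k j with hvdef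
    have hcol : ∀ (A : Matrix d d ℂ), A.mulVec v = fun k => (A * V) k j := by
      intro A
      funext k
      simp [Matrix.mulVec, Matrix.mul_apply, dotProduct, hvdef]
    have hσV : σ * V = V * Matrix.diagonal (RCLike.ofReal ∘ q) := by
      conv_lhs => rw [hσH.spectral_theorem, Unitary.conjStarAlgAut_apply]
      rw [Matrix.mul_assoc, Matrix.mul_assoc, hV', Matrix.mul_one]
    have hσv : σ.mulVec v = 0 := by
      rw [hcol, hσV]
      funext k
      simp [Matrix.mul_diagonal, hqj, Function.comp]
    have hρv : ρ.mulVec v = 0 := hsupp v hσv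
    have hρV : ∀ k, (ρ * V) k j = 0 := by
      intro k
      have := congrFun ((hcol ρ).symm.trans hρv) k
      simpa using this
    have hkey : star U * (ρ * V) = Matrix.diagonal ((RCLike.ofReal ∘ p : d → ℂ)) * M := by
      conv_lhs => rw [hρH.spectral_theorem, Unitary.conjStarAlgAut_apply]
      simp only [Matrix.mul_assoc]
      rw [← Matrix.mul_assoc (star U) U, hU, Matrix.one_mul]
    have h0 : (Matrix.diagonal ((RCLike.ofReal ∘ p : d → ℂ)) * M) i j = 0 := by
      rw [← hkey, Matrix.mul_apply]
      exact Finset.sum_eq_zero fun k _ => by rw [hρV k, mul_zero]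
    rw [Matrix.diagonal_mul] at h0
    have hM0 : M i j = 0 := by
      have hpne : ((RCLike.ofReal ∘ p : d → ℂ)) i ≠ 0 := by
        simp only [Function.comp_apply, ne_eq, RCLike.ofReal_eq_zero]
        exact hpi.ne'
      exact (mul_eq_zero.mp h0).resolve_left hpne
    rw [hwdef]
    simp [hM0]
  -- rewrite both sides as explicit sums
  have hL1 : (ρ * logm ρ).trace
      = ((∑ i, p i * (if p i ≤ 0 then 0 else Real.log (p i)) : ℝ) : ℂ) := by
    have e1 := mfun_mul_mfun (fun x => x) (fun x => if x ≤ 0 then 0 else Real.log x) hρH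
    rw [mfun_id hρH] at e1
    rw [logm, e1, trace_mfun _ hρH]
  have hL2 : (ρ * logm σ).trace
      = ((∑ i, ∑ j, p i * (if q j ≤ 0 then 0 else Real.log (q j)) * w i j : ℝ) : ℂ) := by
    have e2 := trace_mfun_mul_mfun (fun x => x) (fun x => if x ≤ 0 then 0 else Real.log x) hρH hσH
    rw [mfun_id hρH] at e2
    rw [logm, e2]
  have hR : ((powm ρ (1 + c) * powm σ (-c)).trace)
      = ((∑ i, ∑ j, (if p i ≤ 0 then (0:ℝ) else p i ^ (1+c)) *
          (if q j ≤ 0 then (0:ℝ) else q j ^ (-c)) * w i j : ℝ) : ℂ) := by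
    rw [powm, powm, trace_mfun_mul_mfun _ _ hρH hσH]
  rw [qRelEnt, mul_sub, Matrix.trace_sub, Complex.sub_re, hL1, hL2, hR,
    Complex.ofReal_re, Complex.ofReal_re, Complex.ofReal_re]
  -- pure real inequality now
  have hone : ∑ i, ∑ j, p i * w i j = 1 := by
    rw [← hsum_p]
    refine Finset.sum_congr rfl fun i _ => ?_
    rw [← Finset.mul_sum, hrow, mul_one]
  have hfirst : ∑ i, p i * (if p i ≤ 0 then 0 else Real.log (p i))
      = ∑ i, ∑ j, p i * (if p i ≤ 0 then 0 else Real.log (p i)) * w i j := by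
    refine Finset.sum_congr rfl fun i _ => ?_
    rw [← Finset.mul_sum, hrow, mul_one]
  rw [hfirst]
  calc
    (∑ i, ∑ j, p i * (if p i ≤ 0 then 0 else Real.log (p i)) * w i j)
        - ∑ i, ∑ j, p i * (if q j ≤ 0 then 0 else Real.log (q j)) * w i j
      = ∑ i, ∑ j, (p i * (if p i ≤ 0 then 0 else Real.log (p i)) * w i j
          - p i * (if q j ≤ 0 then 0 else Real.log (q j)) * w i j) := by
        rw [← Finset.sum_sub_distrib]
        exact Finset.sum_congr rfl fun i _ => by rw [← Finset.sum_sub_distrib]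
    _ ≤ ∑ i, ∑ j, (1/c) * ((if p i ≤ 0 then (0:ℝ) else p i ^ (1+c)) *
          (if q j ≤ 0 then (0:ℝ) else q j ^ (-c)) * w i j - p i * w i j) := by
        refine Finset.sum_le_sum fun i _ => Finset.sum_le_sum fun j _ => ?_
        exact key_term c (p i) (q j) (w i j) hc (hpnn i) (hqnn j) (hwnn i j) (hzero i j)
    _ = (1/c) * ((∑ i, ∑ j, (if p i ≤ 0 then (0:ℝ) else p i ^ (1+c)) *
          (if q j ≤ 0 then (0:ℝ) else q j ^ (-c)) * w i j) - 1) := by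
        rw [← hone, mul_sub, Finset.mul_sum, Finset.mul_sum, ← Finset.sum_sub_distrib]
        refine Finset.sum_congr rfl fun i _ => ?_
        rw [Finset.mul_sum, Finset.mul_sum, ← Finset.sum_sub_distrib]
        exact Finset.sum_congr rfl fun j _ => by ring
end

section
/- Let X be a Hermitian matrix with operator norm ‖X‖ < 1 and let r be a real number. Then (I + X)^r = Σ_{i=0}^∞ C(r,i) X^i, where C(r,i) = r(r−1)···(r−i+1)/i! is the generalized binomial coefficient, and the series converges in operator norm. -/
open Matrix
open scoped ComplexOrder

variable {d : Type*} [Fintype d] [DecidableEq d]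

section BinomialScalar
open Finset

noncomputable def bc (r : ℝ) (i : ℕ) : ℝ := (∏ j ∈ Finset.range i, (r - j)) / (Nat.factorial i : ℝ)

lemma bc_zero (r : ℝ) : bc r 0 = 1 := by simp [bc]

lemma bc_succ (r : ℝ) (i : ℕ) : bc r (i + 1) * (i + 1) = bc r i * (r - i) := by
  have h : (Nat.factorial i : ℝ) ≠ 0 := Nat.cast_ne_zero.mpr (Nat.factorial_ne_zero i)
  have h2 : ((i : ℝ) + 1) ≠ 0 := by positivity
  rw [bc, bc, prod_range_succ, Nat.factorial_succ]
  push_cast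
  field_simp

lemma bc_bound (r : ℝ) : ∃ m : ℕ, ∀ n : ℕ, |bc r n| ≤ ((n : ℝ) + 1) ^ m := by
  obtain ⟨m, hm⟩ := exists_nat_ge |r|
  refine ⟨m, fun n => ?_⟩
  induction n with
  | zero => simp [bc_zero]
  | succ n ih =>
    have h1 : ((n : ℝ) + 1) ≠ 0 := by positivity
    have habs : |bc r (n + 1)| = |bc r n| * |r - n| / ((n : ℝ) + 1) := by
      have := bc_succ r n
      have : bc r (n + 1) = bc r n * (r - n) / ((n : ℝ) + 1) := by
        field_simp at this ⊢; linarith [this]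
      rw [this, abs_div, abs_mul, abs_of_pos (by positivity : (0:ℝ) < (n:ℝ)+1)]
    rw [habs]
    have hrn : |r - n| ≤ (n : ℝ) + m := by
      have := abs_sub_abs_le_abs_sub r (n : ℝ)
      have h2 := abs_abs_sub_abs_le_abs_sub r (n : ℝ)
      calc |r - (n:ℝ)| ≤ |r| + |(n:ℝ)| := abs_sub _ _
        _ ≤ m + n := by rw [abs_of_nonneg (by positivity : (0:ℝ) ≤ (n:ℝ))]; linarith
        _ = (n:ℝ) + m := by ring
    -- key: ((n+1))^m * (n + m) ≤ ((n+2))^m * (n+1)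
    have key : ((n : ℝ) + 1) ^ m * ((n : ℝ) + m) ≤ ((n : ℝ) + 2) ^ m * ((n : ℝ) + 1) := by
      have hb : (1 : ℝ) + m * (1 / ((n : ℝ) + 1)) ≤ (1 + 1 / ((n : ℝ) + 1)) ^ m := by
        refine one_add_mul_le_pow ?_ m
        have : (0:ℝ) < 1 / ((n:ℝ)+1) := by positivity
        linarith
      have hpow : ((n : ℝ) + 2) ^ m = ((n : ℝ) + 1) ^ m * (1 + 1 / ((n : ℝ) + 1)) ^ m := by
        rw [← mul_pow]; congr 1; field_simp; ring
      rw [hpow]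
      have h3 : ((n : ℝ) + 1) ^ m * ((1 : ℝ) + m * (1 / ((n : ℝ) + 1))) * ((n:ℝ)+1)
          ≤ ((n : ℝ) + 1) ^ m * (1 + 1 / ((n : ℝ) + 1)) ^ m * ((n:ℝ)+1) := by
        have hp : (0:ℝ) ≤ ((n : ℝ) + 1) ^ m := by positivity
        exact mul_le_mul_of_nonneg_right (mul_le_mul_of_nonneg_left hb hp) (by positivity)
      calc ((n : ℝ) + 1) ^ m * ((n : ℝ) + m)
          = ((n : ℝ) + 1) ^ m * ((1 : ℝ) + m * (1 / ((n : ℝ) + 1))) * ((n:ℝ)+1) - ((n:ℝ)+1)^m := by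
            field_simp; ring
        _ ≤ ((n : ℝ) + 1) ^ m * (1 + 1 / ((n : ℝ) + 1)) ^ m * ((n:ℝ)+1) - ((n:ℝ)+1)^m := by linarith
        _ ≤ ((n : ℝ) + 1) ^ m * (1 + 1 / ((n : ℝ) + 1)) ^ m * ((n:ℝ)+1) := by
            have : (0:ℝ) ≤ ((n:ℝ)+1)^m := by positivity
            linarith
    have hba : (0:ℝ) ≤ |bc r n| := abs_nonneg _
    have step : |bc r n| * |r - n| ≤ ((n:ℝ)+1)^m * ((n:ℝ)+m) := by
      exact mul_le_mul ih hrn (abs_nonneg _) (by positivity)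
    rw [div_le_iff₀ (by positivity : (0:ℝ) < (n:ℝ)+1)]
    push_cast
    calc |bc r n| * |r - (n:ℝ)| ≤ ((n:ℝ)+1)^m * ((n:ℝ)+m) := step
      _ ≤ ((n:ℝ)+2)^m * ((n:ℝ)+1) := key
      _ = ((n:ℝ)+1+1)^m * ((n:ℝ)+1) := by ring_nf

set_option maxHeartbeats 1000000 in
lemma summable_bc (r : ℝ) (k : ℕ) {t : ℝ} (h0 : 0 ≤ t) (h1 : t < 1) :
    Summable (fun n : ℕ => |bc r n| * ((n : ℝ) + 1) ^ k * t ^ n) := by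
  rcases eq_or_lt_of_le h0 with rfl | ht0
  · refine summable_of_ne_finset_zero (s := {0}) (fun n hn => ?_)
    have : n ≠ 0 := by simpa using hn
    simp [zero_pow this]
  obtain ⟨m, hm⟩ := bc_bound r
  have hgeo : Summable (fun n : ℕ => ((n : ℝ)) ^ (m + k) * t ^ n) :=
    summable_pow_mul_geometric_of_norm_lt_one (m + k) (by rwa [Real.norm_eq_abs, abs_of_pos ht0])
  have hshift : Summable (fun n : ℕ => (((n + 1 : ℕ)) : ℝ) ^ (m + k) * t ^ (n + 1)) :=
    (summable_nat_add_iff 1).mpr hgeo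
  have hgeo' : Summable (fun n : ℕ => ((n : ℝ) + 1) ^ (m + k) * t ^ n) := by
    have := hshift.mul_left (1 / t)
    refine this.congr (fun n => ?_)
    push_cast
    field_simp
    ring
  refine hgeo'.of_nonneg_of_le (fun n => by positivity) (fun n => ?_)
  calc |bc r n| * ((n : ℝ) + 1) ^ k * t ^ n
      ≤ ((n : ℝ) + 1) ^ m * ((n : ℝ) + 1) ^ k * t ^ n := by
        gcongr
        exact hm n
    _ = ((n : ℝ) + 1) ^ (m + k) * t ^ n := by rw [pow_add]

lemma hasSum_bc (r : ℝ) {x : ℝ} (hx : |x| < 1) :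
    HasSum (fun i : ℕ => bc r i * x ^ i) ((1 + x) ^ r) := by
  set t : ℝ := (|x| + 1) / 2 with ht_def
  have h0x : (0:ℝ) ≤ |x| := abs_nonneg x
  have hxt : |x| < t := by rw [ht_def]; linarith
  have ht0 : 0 < t := by rw [ht_def]; linarith
  have ht1 : t < 1 := by rw [ht_def]; linarith
  set s : Set ℝ := Set.Ioo (-t) t with hs_def
  have hs : IsOpen s := isOpen_Ioo
  have hconn : IsPreconnected s := isPreconnected_Ioo
  have hx_mem : x ∈ s := by
    rw [hs_def]
    exact ⟨by cases abs_lt.mp hxt; linarith, by cases abs_lt.mp hxt; linarith⟩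
  have h0mem : (0:ℝ) ∈ s := ⟨by linarith, by linarith⟩
  have habs : ∀ y ∈ s, |y| ≤ t := by
    intro y hy
    exact (abs_lt.mpr ⟨hy.1, hy.2⟩).le
  -- derivative bound
  set u : ℕ → ℝ := fun n => |bc r n| * (n : ℝ) * t ^ (n - 1) with hu_def
  have hu : Summable u := by
    refine ((summable_bc r 1 ht0.le ht1).mul_left (1 / t)).of_nonneg_of_le
      (fun n => by rw [hu_def]; positivity) (fun n => ?_)
    rw [hu_def]
    cases n with
    | zero => simp; positivity
    | succ n =>
      simp only [Nat.add_sub_cancel, pow_one]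
      have : |bc r (n+1)| * ((n:ℝ)+1) * t ^ n ≤ |bc r (n+1)| * (((n:ℝ)+1)+1) * t ^ n := by
        gcongr; linarith
      have hrhs : 1 / t * (|bc r (n+1)| * (((n+1:ℕ):ℝ)+1) * t ^ (n+1))
          = |bc r (n+1)| * (((n:ℝ)+1)+1) * t ^ n := by
        rw [pow_succ]
        push_cast
        field_simp
      rw [hrhs]
      push_cast
      have htn : (0:ℝ) ≤ t ^ n := by positivity
      nlinarith [mul_nonneg (abs_nonneg (bc r (n+1))) htn]
  set g : ℕ → ℝ → ℝ := fun n y => bc r n * y ^ n with hg_def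
  set g' : ℕ → ℝ → ℝ := fun n y => bc r n * ((n : ℝ) * y ^ (n - 1)) with hg'_def
  have hg : ∀ n y, y ∈ s → HasDerivAt (g n) (g' n y) y := fun n y _ =>
    (hasDerivAt_pow n y).const_mul (bc r n)
  have hg' : ∀ n y, y ∈ s → ‖g' n y‖ ≤ u n := by
    intro n y hy
    rw [hg'_def, hu_def]
    simp only [Real.norm_eq_abs, abs_mul]
    rw [abs_pow]
    have h1 : |y| ^ (n - 1) ≤ t ^ (n - 1) := pow_le_pow_left₀ (abs_nonneg y) (habs y hy) _
    have h2 : |(n : ℝ)| = (n : ℝ) := abs_of_nonneg (by positivity)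
    rw [h2]
    calc |bc r n| * ((n:ℝ) * |y| ^ (n-1)) ≤ |bc r n| * ((n:ℝ) * t ^ (n-1)) := by gcongr
      _ = |bc r n| * (n:ℝ) * t ^ (n-1) := by ring
  have hg0 : Summable (fun n => g n 0) := by
    refine summable_of_ne_finset_zero (s := {0}) (fun n hn => ?_)
    have : n ≠ 0 := by simpa using hn
    rw [hg_def]; simp [zero_pow this]
  set F : ℝ → ℝ := fun y => ∑' n, g n y with hF_def
  have hF : ∀ y ∈ s, HasDerivAt F (∑' n, g' n y) y := fun y hy =>
    hasDerivAt_tsum_of_isPreconnected hu hs hconn hg hg' h0mem hg0 hy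
  -- summabilities at points of s
  have hS1 : ∀ y ∈ s, Summable (fun n => bc r n * y ^ n) := by
    intro y hy
    refine (summable_bc r 0 ht0.le ht1).of_norm_bounded (fun n => ?_)
    rw [Real.norm_eq_abs, abs_mul, abs_pow, pow_zero, mul_one]
    exact mul_le_mul_of_nonneg_left (pow_le_pow_left₀ (abs_nonneg y) (habs y hy) n) (abs_nonneg _)
  have hS2 : ∀ y ∈ s, Summable (fun n : ℕ => (n : ℝ) * bc r n * y ^ n) := by
    intro y hy
    refine (summable_bc r 1 ht0.le ht1).of_norm_bounded (fun n => ?_)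
    rw [Real.norm_eq_abs, abs_mul, abs_mul, abs_pow]
    rw [abs_of_nonneg (show (0:ℝ) ≤ (n:ℝ) by positivity), pow_one]
    calc (n:ℝ) * |bc r n| * |y| ^ n ≤ ((n:ℝ)+1) * |bc r n| * t ^ n := by
          refine mul_le_mul ?_ (pow_le_pow_left₀ (abs_nonneg y) (habs y hy) n)
            (by positivity) (by positivity)
          exact mul_le_mul_of_nonneg_right (by linarith) (abs_nonneg _)
      _ = |bc r n| * ((n:ℝ)+1) * t ^ n := by ring
  have hS2' : ∀ y ∈ s, Summable (fun n => g' n y) := fun y hy =>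
    hu.of_norm_bounded (fun n => hg' n y hy)
  have hS3 : ∀ y ∈ s, Summable (fun n : ℕ => ((n:ℝ)+1) * bc r (n+1) * y ^ n) := by
    intro y hy
    have heq : (fun n : ℕ => ((n:ℝ)+1) * bc r (n+1) * y ^ n)
        = fun n : ℕ => r * (bc r n * y ^ n) - (n:ℝ) * bc r n * y ^ n := by
      funext n
      have h := bc_succ r n
      linear_combination y ^ n * h
    rw [heq]
    exact ((hS1 y hy).mul_left r).sub (hS2 y hy)
  -- the key ODE identity
  have key : ∀ y ∈ s, (1 + y) * (∑' n, g' n y) = r * F y := by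
    intro y hy
    have hshift : (∑' n, g' n y) = ∑' n : ℕ, ((n:ℝ)+1) * bc r (n+1) * y ^ n := by
      rw [Summable.tsum_eq_zero_add (hS2' y hy)]
      have h0 : g' 0 y = 0 := by rw [hg'_def]; simp
      rw [h0, zero_add]
      refine tsum_congr (fun n => ?_)
      rw [hg'_def]
      simp only [Nat.add_sub_cancel]
      push_cast
      ring
    have hys : y * (∑' n, g' n y) = ∑' n : ℕ, (n:ℝ) * bc r n * y ^ n := by
      rw [← tsum_mul_left]
      refine tsum_congr (fun n => ?_)
      rw [hg'_def]
      cases n with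
      | zero => simp
      | succ n =>
        simp only [Nat.add_sub_cancel]
        rw [pow_succ]
        push_cast
        ring
    rw [add_mul, one_mul, hys, hshift]
    rw [← Summable.tsum_add (hS3 y hy) (hS2 y hy)]
    rw [hF_def]
    simp only [hg_def]
    rw [← tsum_mul_left]
    refine tsum_congr (fun n => ?_)
    have h := bc_succ r n
    linear_combination y ^ n * h
  -- G is constant
  set G : ℝ → ℝ := fun y => F y * (1 + y) ^ (-r) with hG_def
  have hGderiv : ∀ y ∈ s, HasDerivAt G 0 y := by
    intro y hy
    have hy1 : 0 < 1 + y := by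
      have := hy.1
      rw [hs_def] at hy
      have := hy.1
      linarith [ht1]
    have h1 : HasDerivAt (fun y : ℝ => 1 + y) 1 y := (hasDerivAt_id y).const_add 1
    have hr : HasDerivAt (fun y : ℝ => (1 + y) ^ (-r)) (-r * (1 + y) ^ (-r - 1)) y := by
      have := h1.rpow_const (p := -r) (Or.inl hy1.ne')
      simpa using this
    have hprod := (hF y hy).mul hr
    refine HasDerivAt.congr_deriv (show HasDerivAt G _ y from hprod) (Eq.symm ?_)
    have hpow : (1 + y) ^ (-r) = (1 + y) ^ (-r - 1) * (1 + y) := by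
      rw [← Real.rpow_add_one hy1.ne']
      norm_num
    have hkey := key y hy
    rw [hpow]
    linear_combination (-((1 + y) ^ (-r - 1))) * hkey
  have hGx : G x = G 0 := by
    rcases le_or_gt 0 x with hx0 | hx0
    · have hsub : Set.Icc (0:ℝ) x ⊆ s := by
        intro y hy
        exact ⟨by linarith [hy.1], lt_of_le_of_lt hy.2 ((abs_lt.mp hxt).2)⟩
      have hcont : ContinuousOn G (Set.Icc 0 x) := fun y hy =>
        (hGderiv y (hsub hy)).continuousAt.continuousWithinAt
      have hderiv : ∀ y ∈ Set.Ico (0:ℝ) x, HasDerivWithinAt G 0 (Set.Ici y) y := fun y hy =>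
        (hGderiv y (hsub (Set.Ico_subset_Icc_self hy))).hasDerivWithinAt
      exact constant_of_has_deriv_right_zero hcont hderiv x ⟨hx0, le_refl x⟩
    · have hsub : Set.Icc x (0:ℝ) ⊆ s := by
        intro y hy
        exact ⟨lt_of_lt_of_le (abs_lt.mp hxt).1 hy.1, by linarith [hy.2]⟩
      have hcont : ContinuousOn G (Set.Icc x 0) := fun y hy =>
        (hGderiv y (hsub hy)).continuousAt.continuousWithinAt
      have hderiv : ∀ y ∈ Set.Ico x (0:ℝ), HasDerivWithinAt G 0 (Set.Ici y) y := fun y hy =>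
        (hGderiv y (hsub (Set.Ico_subset_Icc_self hy))).hasDerivWithinAt
      exact (constant_of_has_deriv_right_zero hcont hderiv 0 ⟨hx0.le, le_refl 0⟩).symm
  have hF0 : F 0 = 1 := by
    show (∑' n : ℕ, g n 0) = 1
    rw [tsum_eq_single 0 (fun n hn => by simp only [hg_def]; simp [zero_pow hn])]
    simp only [hg_def]
    simp [bc_zero]
  have hG0 : G 0 = 1 := by
    rw [hG_def]
    simp [hF0, Real.one_rpow]
  have hpos : 0 < 1 + x := by
    have := (abs_lt.mp hx).1
    linarith
  have hFx : F x = (1 + x) ^ r := by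
    have h := hGx.trans hG0
    rw [hG_def] at h
    simp only at h
    rw [Real.rpow_neg hpos.le] at h
    have hne : (1 + x) ^ r ≠ 0 := (Real.rpow_pos_of_pos hpos r).ne'
    field_simp at h
    exact h
  have := (hS1 x hx_mem).hasSum
  rw [show (∑' n, bc r n * x ^ n) = F x from rfl, hFx] at this
  exact this

end BinomialScalar

open scoped Matrix.Norms.L2Operator in
/-- For a Hermitian matrix `X` with operator norm `‖X‖ < 1` and any real `r`,
`(I + X)^r = Σ_{i=0}^∞ C(r,i) X^i` where `C(r,i) = r(r−1)⋯(r−i+1)/i!` is the generalized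
binomial coefficient, the series converging (in norm, equivalently entrywise). -/
theorem binomial_series_posDef_rpow (X : Matrix d d ℂ)
    (hX : X.IsHermitian) (hXnorm : ‖X‖ < 1) (r : ℝ) :
    HasSum
      (fun i : ℕ =>
        ((∏ j ∈ Finset.range i, (r - (j : ℝ))) / (Nat.factorial i : ℝ)) • X ^ i)
      (powm (1 + X) r) := by
  have hA : (1 + X).IsHermitian := Matrix.isHermitian_one.add hX
  set V : Matrix d d ℂ := (hA.eigenvectorUnitary : Matrix d d ℂ) with hV
  set ν : d → ℝ := hA.eigenvalues with hν
  have hVV : V * star V = 1 := Matrix.mem_unitaryGroup_iff.mp hA.eigenvectorUnitary.2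
  have hVV' : star V * V = 1 := Matrix.mem_unitaryGroup_iff'.mp hA.eigenvectorUnitary.2
  -- eigenvalue bound
  have hev : ∀ k, |ν k - 1| < 1 := by
    intro k
    set v : EuclideanSpace ℂ d := hA.eigenvectorBasis k with hv
    have hv1 : ‖v‖ = 1 := hA.eigenvectorBasis.orthonormal.1 k
    have h1 : (1 + X) *ᵥ ⇑v = ν k • ⇑v := hA.mulVec_eigenvectorBasis k
    rw [Matrix.add_mulVec, Matrix.one_mulVec] at h1
    have hXv : X *ᵥ ⇑v = (ν k - 1) • ⇑v := by
      have : X *ᵥ ⇑v = ν k • ⇑v - ⇑v := by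
        rw [← h1]; abel
      rw [this, sub_smul, one_smul]
    have hb := Matrix.l2_opNorm_mulVec X v
    have h2 : (EuclideanSpace.equiv d ℂ).symm (X *ᵥ v) = (ν k - 1) • v := by rw [hXv]; rfl
    rw [h2, norm_smul, hv1, mul_one, mul_one, Real.norm_eq_abs] at hb
    exact lt_of_le_of_lt hb hXnorm
  have hpos : ∀ k, 0 < ν k := by
    intro k
    have := (abs_lt.mp (hev k)).1
    linarith
  -- spectral theorem pieces
  have hspec : 1 + X = V * Matrix.diagonal (fun k => (ν k : ℂ)) * star V := by
    have := hA.spectral_theorem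
    rw [this, Unitary.conjStarAlgAut_apply]; rfl
  have hXdiag : X = V * Matrix.diagonal (fun k => (ν k : ℂ) - 1) * star V := by
    have hd : Matrix.diagonal (fun k => (ν k : ℂ) - 1)
        = Matrix.diagonal (fun k => (ν k : ℂ)) - 1 := by
      rw [← Matrix.diagonal_one, Matrix.diagonal_sub]
    rw [hd, Matrix.mul_sub, Matrix.sub_mul, mul_one, hVV, ← hspec]
    abel
  have hconj : ∀ A B : Matrix d d ℂ, (V * A * star V) * (V * B * star V) = V * (A * B) * star V := by
    intro A B
    calc (V * A * star V) * (V * B * star V)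
        = V * (A * ((star V * V) * (B * star V))) := by simp only [Matrix.mul_assoc]
      _ = V * (A * B) * star V := by rw [hVV']; simp only [Matrix.one_mul, Matrix.mul_assoc]
  have hXpow : ∀ i : ℕ, X ^ i = V * Matrix.diagonal (fun k => ((ν k : ℂ) - 1) ^ i) * star V := by
    intro i
    induction i with
    | zero => simp [hVV]
    | succ i ih =>
      rw [pow_succ, ih, hXdiag, hconj, Matrix.diagonal_mul_diagonal]
      simp only [← pow_succ]
  -- scalar sums
  have hscal : ∀ k : d, HasSum (fun i : ℕ => (bc r i : ℂ) * ((ν k : ℂ) - 1) ^ i)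
      (((ν k ^ r : ℝ)) : ℂ) := by
    intro k
    have h1 : HasSum (fun i : ℕ => bc r i * (ν k - 1) ^ i) ((1 + (ν k - 1)) ^ r) :=
      hasSum_bc r (hev k)
    rw [show (1:ℝ) + (ν k - 1) = ν k by ring] at h1
    have h2 := Complex.hasSum_ofReal.mpr h1
    have heq : (fun i : ℕ => ((bc r i * (ν k - 1) ^ i : ℝ) : ℂ))
        = fun i : ℕ => (bc r i : ℂ) * ((ν k : ℂ) - 1) ^ i := by
      funext i; push_cast; ring
    rwa [heq] at h2
  have hpi : HasSum (fun i : ℕ => (fun k => (bc r i : ℂ) * ((ν k : ℂ) - 1) ^ i))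
      (fun k => (((ν k ^ r : ℝ)) : ℂ)) := Pi.hasSum.mpr hscal
  set Dg : (d → ℂ) →L[ℂ] Matrix d d ℂ :=
    LinearMap.toContinuousLinearMap (Matrix.diagonalLinearMap d ℂ ℂ) with hDg
  have hDg_apply : ∀ v : d → ℂ, Dg v = Matrix.diagonal v := fun v => rfl
  have hdiag := Dg.hasSum hpi
  have hmul := (hdiag.mul_left V).mul_right (star V)
  -- now convert
  have hterm : ∀ i : ℕ,
      V * Dg (fun k => (bc r i : ℂ) * ((ν k : ℂ) - 1) ^ i) * star V
        = ((∏ j ∈ Finset.range i, (r - (j : ℝ))) / (Nat.factorial i : ℝ)) • X ^ i := by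
    intro i
    rw [hDg_apply]
    have hd : Matrix.diagonal (fun k => (bc r i : ℂ) * ((ν k : ℂ) - 1) ^ i)
        = (bc r i : ℂ) • Matrix.diagonal (fun k => ((ν k : ℂ) - 1) ^ i) := by
      rw [← Matrix.diagonal_smul]
      congr 1
    rw [hd, Matrix.mul_smul, Matrix.smul_mul, hXpow i]
    show (bc r i : ℂ) • _ = bc r i • _
    ext a b
    simp [Matrix.smul_apply, Complex.real_smul]
  have htarget : V * Dg (fun k => (((ν k ^ r : ℝ)) : ℂ)) * star V = powm (1 + X) r := by
    have hfn : (fun k => (((if ν k ≤ 0 then (0:ℝ) else ν k ^ r) : ℝ) : ℂ))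
        = (fun k => (((ν k ^ r : ℝ)) : ℂ)) := by
      funext k
      rw [if_neg (not_le.mpr (hpos k))]
    rw [hDg_apply, powm, mfun, dif_pos hA, ← hfn]
  have hfun : (fun i : ℕ => V * Dg (fun k => (bc r i : ℂ) * ((ν k : ℂ) - 1) ^ i) * star V)
      = fun i : ℕ =>
        ((∏ j ∈ Finset.range i, (r - (j : ℝ))) / (Nat.factorial i : ℝ)) • X ^ i :=
    funext hterm
  rw [hfun, htarget] at hmul
  exact hmul
end

section
/- For density matrices ρ and σ on a finite-dimensional Hilbert space, the trace distance satisfies ‖ρ − σ‖₁² ≤ 2 ln 2 · D(ρ‖σ) when D is taken with logarithm base 2 (equivalently ‖ρ−σ‖₁² ≤ 2·D_nat(ρ‖σ) with natural-log relative entropy), provided supp(ρ) ⊆ supp(σ). -/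
open Matrix
open scoped ComplexOrder

variable {d : Type*} [Fintype d] [DecidableEq d]

/- ===== scalar analysis lemmas ===== -/

private noncomputable def qpGfun (x : ℝ) : ℝ := (x+1)*Real.log x - 2*(x-1)

private noncomputable def qpFfun (x : ℝ) : ℝ :=
  2*(x+2)*(x*Real.log x - x + 1) - 3*(x-1)^2

private lemma qpGfun_hasDeriv {x : ℝ} (hx : 0 < x) :
    HasDerivAt qpGfun (Real.log x + x⁻¹ - 1) x := by
  have h1 : HasDerivAt (fun y : ℝ => (y+1)*Real.log y)
      (1 * Real.log x + (x+1) * x⁻¹) x :=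
    ((hasDerivAt_id x).add_const 1).mul (Real.hasDerivAt_log hx.ne')
  have h2 : HasDerivAt (fun y : ℝ => 2*(y-1)) (2*1) x :=
    ((hasDerivAt_id x).sub_const 1).const_mul 2
  have := h1.sub h2
  refine (show HasDerivAt qpGfun _ x from this).congr_deriv ?_
  field_simp
  ring

private lemma qpGfun_mono : MonotoneOn qpGfun (Set.Ioi 0) := by
  apply monotoneOn_of_deriv_nonneg (convex_Ioi 0)
  · intro x hx
    exact (qpGfun_hasDeriv hx).continuousAt.continuousWithinAt
  · rw [interior_Ioi]
    intro x hx
    exact (qpGfun_hasDeriv hx).differentiableAt.differentiableWithinAt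
  · rw [interior_Ioi]
    intro x hx
    rw [(qpGfun_hasDeriv hx).deriv]
    have := Real.one_sub_inv_le_log_of_pos hx
    linarith

private lemma qpGfun_one : qpGfun 1 = 0 := by simp [qpGfun]

private lemma qpFfun_hasDeriv {x : ℝ} (hx : 0 < x) :
    HasDerivAt qpFfun (4 * qpGfun x) x := by
  have h1 : HasDerivAt (fun y : ℝ => y * Real.log y) (Real.log x + 1) x :=
    Real.hasDerivAt_mul_log hx.ne'
  have h2 : HasDerivAt (fun y : ℝ => y * Real.log y - y + 1)
      (Real.log x + 1 - 1) x := (h1.sub (hasDerivAt_id x)).add_const 1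
  have h3 : HasDerivAt (fun y : ℝ => 2*(y+2)) (2*1) x :=
    ((hasDerivAt_id x).add_const 2).const_mul 2
  have h4 : HasDerivAt (fun y : ℝ => 3*(y-1)^2) (3*(2*(x-1)^1*1)) x :=
    (((hasDerivAt_id x).sub_const 1).pow 2).const_mul 3
  have := (h3.mul h2).sub h4
  refine (show HasDerivAt qpFfun _ x from this).congr_deriv ?_
  simp [qpGfun]
  ring

private lemma qpFfun_cont : Continuous qpFfun := by
  unfold qpFfun
  exact ((continuous_const.mul (continuous_id.add continuous_const)).mul
    ((Real.continuous_mul_log.sub continuous_id).add continuous_const)).sub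
    (continuous_const.mul ((continuous_id.sub continuous_const).pow 2))

private lemma qpFfun_one : qpFfun 1 = 0 := by
  simp [qpFfun]

private lemma qpFfun_nonneg {x : ℝ} (hx : 0 ≤ x) : 0 ≤ qpFfun x := by
  rcases le_or_gt 1 x with h1 | h1
  · have hmono : MonotoneOn qpFfun (Set.Ici 1) := by
      apply monotoneOn_of_deriv_nonneg (convex_Ici 1)
        qpFfun_cont.continuousOn
      · rw [interior_Ici]
        intro y hy
        exact (qpFfun_hasDeriv (by linarith [Set.mem_Ioi.mp hy] :
          (0:ℝ) < y)).differentiableAt.differentiableWithinAt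
      · rw [interior_Ici]
        intro y hy
        have hy1 : (1:ℝ) < y := hy
        rw [(qpFfun_hasDeriv (by linarith : (0:ℝ) < y)).deriv]
        have : qpGfun 1 ≤ qpGfun y :=
          qpGfun_mono (by norm_num) (by simp only [Set.mem_Ioi]; linarith) hy1.le
        rw [qpGfun_one] at this
        linarith
    have := hmono (Set.mem_Ici.mpr le_rfl) (Set.mem_Ici.mpr h1) h1
    rw [qpFfun_one] at this
    exact this
  · have hanti : AntitoneOn qpFfun (Set.Icc 0 1) := by
      apply antitoneOn_of_deriv_nonpos (convex_Icc 0 1)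
        qpFfun_cont.continuousOn
      · rw [interior_Icc]
        intro y hy
        exact (qpFfun_hasDeriv hy.1).differentiableAt.differentiableWithinAt
      · rw [interior_Icc]
        intro y hy
        rw [(qpFfun_hasDeriv hy.1).deriv]
        have : qpGfun y ≤ qpGfun 1 :=
          qpGfun_mono (Set.mem_Ioi.mpr hy.1) (by norm_num) hy.2.le
        rw [qpGfun_one] at this
        linarith
    have := hanti (Set.mem_Icc.mpr ⟨hx, h1.le⟩)
      (Set.mem_Icc.mpr ⟨by norm_num, le_rfl⟩) h1.le
    rw [qpFfun_one] at this
    exact this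

private lemma qp_core_ineq {x : ℝ} (hx : 0 ≤ x) :
    3*(x-1)^2 ≤ 2*(x+2)*(x*Real.log x - x + 1) := by
  have := qpFfun_nonneg hx
  unfold qpFfun at this
  linarith

private lemma qp_pointwise {p q : ℝ} (hp : 0 ≤ p) (hq : 0 < q) :
    3*(p-q)^2 ≤ 2*(p+2*q)*(p*Real.log p - p*Real.log q - p + q) := by
  rcases eq_or_lt_of_le hp with h0 | hp0
  · rw [← h0]
    ring_nf
    nlinarith [sq_nonneg q, hq]
  · set x := p/q with hxdef
    have hx0 : 0 < x := div_pos hp0 hq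
    have hpx : p = x*q := (div_mul_cancel₀ p hq.ne').symm
    have hcore := qp_core_ineq hx0.le
    calc 3*(p-q)^2 = (3*(x-1)^2)*q^2 := by rw [hpx]; ring
      _ ≤ (2*(x+2)*(x*Real.log x - x + 1))*q^2 :=
          mul_le_mul_of_nonneg_right hcore (sq_nonneg q)
      _ = 2*(p+2*q)*(p*Real.log p - p*Real.log q - p + q) := by
          rw [hpx, Real.log_mul hx0.ne' hq.ne']
          ring

private lemma qp_perterm {p q a : ℝ} (hp : 0 ≤ p) (hq : 0 ≤ q)
    (hs : q = 0 → p * a^2 = 0) :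
    (if p + 2*q = 0 then (0:ℝ) else a * |p - q| * Real.sqrt 3 / Real.sqrt (p + 2*q))^2
      ≤ 2 * (a^2 * (p * (if p ≤ 0 then 0 else Real.log p)
          - p * (if q ≤ 0 then 0 else Real.log q) - p + q)) := by
  by_cases h : p + 2*q = 0
  · rw [if_pos h]
    have hp0 : p = 0 := by linarith [hq]
    have hq0 : q = 0 := by linarith [hp]
    rw [hp0, hq0]
    norm_num
  · rw [if_neg h]
    have hpos : 0 < p + 2*q := lt_of_le_of_ne (by linarith) (Ne.symm h)
    have hplog : p * (if p ≤ 0 then 0 else Real.log p) = p * Real.log p := by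
      rcases eq_or_lt_of_le hp with h0 | hp0
      · rw [← h0]; ring
      · rw [if_neg (not_le.mpr hp0)]
    rw [hplog]
    by_cases hq0 : q = 0
    · have hpne : p ≠ 0 := fun hc => h (by rw [hc, hq0]; ring)
      have ha : a = 0 := by
        have := hs hq0
        have ha2 : a^2 = 0 := by
          rcases mul_eq_zero.mp this with h' | h'
          · exact absurd h' hpne
          · exact h'
        exact pow_eq_zero_iff (by norm_num) |>.mp ha2
      rw [ha]
      norm_num
    · have hqpos : 0 < q := lt_of_le_of_ne hq (Ne.symm hq0)
      rw [if_neg (not_le.mpr hqpos)]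
      have hLHS : (a * |p - q| * Real.sqrt 3 / Real.sqrt (p + 2*q))^2
          = a^2 * (p-q)^2 * 3 / (p + 2*q) := by
        rw [div_pow, mul_pow, mul_pow, sq_abs, Real.sq_sqrt (by norm_num : (0:ℝ) ≤ 3),
          Real.sq_sqrt hpos.le]
      rw [hLHS, div_le_iff₀ hpos]
      have key := qp_pointwise hp hqpos
      nlinarith [mul_le_mul_of_nonneg_left key (sq_nonneg a)]
/- ===== matrix trace lemmas ===== -/

private lemma qp_trace_diag_mul (a : d → ℂ) (B : Matrix d d ℂ) :
    (Matrix.diagonal a * B).trace = ∑ i, a i * B i i := by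
  simp [Matrix.trace, Matrix.diag, Matrix.diagonal_mul]

private lemma qp_trace_diag_mul_mul (a : d → ℂ) (B C : Matrix d d ℂ) :
    (Matrix.diagonal a * (B * C)).trace = ∑ i, ∑ j, a i * (B i j * C j i) := by
  rw [qp_trace_diag_mul]
  refine Finset.sum_congr rfl fun i _ => ?_
  rw [Matrix.mul_apply, Finset.mul_sum]

private lemma qp_trace_conj (U : Matrix d d ℂ) (hU : star U * U = 1) (a : d → ℂ) :
    (U * Matrix.diagonal a * star U).trace = ∑ i, a i := by
  rw [Matrix.trace_mul_cycle, hU, Matrix.one_mul, Matrix.trace_diagonal]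

private lemma qp_trace_conj_mul (U V S : Matrix d d ℂ) (hV : V * star V = 1)
    (a : d → ℂ) :
    ((U * Matrix.diagonal a * star U) * S).trace
      = ∑ i, ∑ j, a i * ((star U * S * V) i j * ((star V * U) j i)) := by
  have hins : star U * S * U = (star U * S * V) * (star V * U) := by
    calc star U * S * U = (star U * S) * ((V * star V) * U) := by
          rw [hV, Matrix.one_mul]
      _ = (star U * S * V) * (star V * U) := by
          simp only [Matrix.mul_assoc]
  calc ((U * Matrix.diagonal a * star U) * S).trace
      = (U * (Matrix.diagonal a * (star U * S))).trace := by
        simp only [Matrix.mul_assoc]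
    _ = ((Matrix.diagonal a * (star U * S)) * U).trace := Matrix.trace_mul_comm _ _
    _ = (Matrix.diagonal a * ((star U * S * V) * (star V * U))).trace := by
        rw [Matrix.mul_assoc, hins]
    _ = ∑ i, ∑ j, a i * ((star U * S * V) i j * ((star V * U) j i)) :=
        qp_trace_diag_mul_mul _ _ _

private lemma qp_conj_mul_conj (Wm : Matrix d d ℂ) (hW2 : star Wm * Wm = 1)
    (a b : d → ℂ) :
    (Wm * Matrix.diagonal a * star Wm) * (Wm * Matrix.diagonal b * star Wm)
      = Wm * Matrix.diagonal (fun i => a i * b i) * star Wm := by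
  calc (Wm * Matrix.diagonal a * star Wm) * (Wm * Matrix.diagonal b * star Wm)
      = Wm * (Matrix.diagonal a * ((star Wm * Wm) * (Matrix.diagonal b * star Wm))) := by
        simp only [Matrix.mul_assoc]
    _ = Wm * (Matrix.diagonal a * (Matrix.diagonal b * star Wm)) := by
        rw [hW2, Matrix.one_mul]
    _ = Wm * ((Matrix.diagonal a * Matrix.diagonal b) * star Wm) := by
        rw [Matrix.mul_assoc]
    _ = Wm * Matrix.diagonal (fun i => a i * b i) * star Wm := by
        rw [Matrix.diagonal_mul_diagonal, ← Matrix.mul_assoc]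

private lemma qp_row_norm_sum {M : Matrix d d ℂ} (h : M * star M = 1) (i : d) :
    ∑ j, ‖M i j‖^2 = 1 := by
  have h1 : (M * star M) i i = 1 := by rw [h]; simp [Matrix.one_apply]
  rw [Matrix.mul_apply] at h1
  have h2 : ∀ j, M i j * (star M) j i = ((‖M i j‖^2 : ℝ) : ℂ) := fun j => by
    rw [Matrix.star_apply, RCLike.star_def, RCLike.mul_conj]; norm_cast
  rw [Finset.sum_congr rfl (fun j _ => h2 j), ← Complex.ofReal_sum] at h1
  exact_mod_cast h1

private lemma qp_col_norm_sum {M : Matrix d d ℂ} (h : star M * M = 1) (j : d) :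
    ∑ i, ‖M i j‖^2 = 1 := by
  have h1 : (star M * M) j j = 1 := by rw [h]; simp [Matrix.one_apply]
  rw [Matrix.mul_apply] at h1
  have h2 : ∀ i, (star M) j i * M i j = ((‖M i j‖^2 : ℝ) : ℂ) := fun i => by
    rw [Matrix.star_apply, RCLike.star_def, RCLike.conj_mul]; norm_cast
  rw [Finset.sum_congr rfl (fun i _ => h2 i), ← Complex.ofReal_sum] at h1
  exact_mod_cast h1
/- ===== the classical Cauchy-Schwarz argument ===== -/

private lemma qp_classical (p q : d → ℝ) (t b r : d → d → ℝ) (T D : ℝ)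
    (hp : ∀ i, 0 ≤ p i) (hq : ∀ j, 0 ≤ q j)
    (hsum_p : ∑ i, p i = 1) (hsum_q : ∑ j, q j = 1)
    (htrow : ∀ i, ∑ j, (t i j)^2 = 1) (htcol : ∀ j, ∑ i, (t i j)^2 = 1)
    (hbrow : ∀ i, ∑ j, (b i j)^2 = 1) (hbcol : ∀ j, ∑ i, (b i j)^2 = 1)
    (hsupp : ∀ j, q j = 0 → ∀ i, p i * (t i j)^2 = 0)
    (hr : ∀ i j, |r i j| ≤ t i j * b i j)
    (hT0 : 0 ≤ T)
    (hT : T = ∑ i, ∑ j, (p i - q j) * r i j)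
    (hD : D = ∑ i, p i * (if p i ≤ 0 then 0 else Real.log (p i))
        - ∑ i, ∑ j, (t i j)^2 * (p i * (if q j ≤ 0 then 0 else Real.log (q j)))) :
    T^2 ≤ 2 * D := by
  set xm : d → d → ℝ := fun i j => if p i + 2*(q j) = 0 then 0
    else t i j * |p i - q j| * Real.sqrt 3 / Real.sqrt (p i + 2*(q j)) with hxm
  set ym : d → d → ℝ := fun i j => b i j * Real.sqrt (p i + 2*(q j)) / Real.sqrt 3
    with hym
  have hstep1 : T ≤ ∑ i, ∑ j, xm i j * ym i j := by
    rw [hT]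
    refine Finset.sum_le_sum fun i _ => Finset.sum_le_sum fun j _ => ?_
    have h1 : (p i - q j) * r i j ≤ |p i - q j| * (t i j * b i j) := by
      calc (p i - q j) * r i j ≤ |(p i - q j) * r i j| := le_abs_self _
        _ = |p i - q j| * |r i j| := abs_mul _ _
        _ ≤ |p i - q j| * (t i j * b i j) :=
            mul_le_mul_of_nonneg_left (hr i j) (abs_nonneg _)
    refine h1.trans ?_
    by_cases hc : p i + 2*(q j) = 0
    · have hp0 : p i = 0 := by linarith [hp i, hq j]
      have hq0 : q j = 0 := by linarith [hp i, hq j]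
      simp [hxm, hc, hp0, hq0]
    · have hpos : 0 < p i + 2*(q j) :=
        lt_of_le_of_ne (by linarith [hp i, hq j]) (Ne.symm hc)
      refine le_of_eq ?_
      rw [hxm, hym]
      dsimp only
      rw [if_neg hc]
      have h3 : Real.sqrt 3 ≠ 0 := by positivity
      have h4 : Real.sqrt (p i + 2*(q j)) ≠ 0 := Real.sqrt_ne_zero'.mpr hpos
      rw [div_mul_div_comm, eq_div_iff (mul_ne_zero h4 h3)]
      ring
  have hCS : (∑ i, ∑ j, xm i j * ym i j)^2
      ≤ (∑ i, ∑ j, (xm i j)^2) * (∑ i, ∑ j, (ym i j)^2) := by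
    have := Finset.sum_mul_sq_le_sq_mul_sq Finset.univ
      (fun z : d × d => xm z.1 z.2) (fun z : d × d => ym z.1 z.2)
    simpa [Fintype.sum_prod_type] using this
  have hym1 : ∑ i, ∑ j, (ym i j)^2 = 1 := by
    have hterm : ∀ i j, (ym i j)^2
        = (b i j)^2 * p i * (3:ℝ)⁻¹ + (b i j)^2 * q j * (2/3) := by
      intro i j
      rw [hym]
      dsimp only
      rw [div_pow, mul_pow, Real.sq_sqrt (by linarith [hp i, hq j] : 0 ≤ p i + 2*(q j)),
        Real.sq_sqrt (by norm_num : (0:ℝ) ≤ 3)]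
      field_simp
    calc ∑ i, ∑ j, (ym i j)^2
        = ∑ i, ∑ j, ((b i j)^2 * p i * (3:ℝ)⁻¹ + (b i j)^2 * q j * (2/3)) := by
          exact Finset.sum_congr rfl fun i _ => Finset.sum_congr rfl fun j _ => hterm i j
      _ = (∑ i, ∑ j, (b i j)^2 * p i * (3:ℝ)⁻¹)
          + (∑ i, ∑ j, (b i j)^2 * q j * (2/3)) := by
          rw [← Finset.sum_add_distrib]
          exact Finset.sum_congr rfl fun i _ => Finset.sum_add_distrib
      _ = 1 := by
          have e1 : ∑ i, ∑ j, (b i j)^2 * p i * (3:ℝ)⁻¹ = 3⁻¹ := by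
            have : ∀ i, ∑ j, (b i j)^2 * p i * (3:ℝ)⁻¹ = p i * 3⁻¹ := by
              intro i
              rw [← Finset.sum_mul, ← Finset.sum_mul, hbrow i, one_mul]
            rw [Finset.sum_congr rfl fun i _ => this i, ← Finset.sum_mul, hsum_p, one_mul]
          have e2 : ∑ i, ∑ j, (b i j)^2 * q j * (2/3 : ℝ) = 2/3 := by
            rw [Finset.sum_comm]
            have : ∀ j, ∑ i, (b i j)^2 * q j * (2/3 : ℝ) = q j * (2/3) := by
              intro j
              rw [← Finset.sum_mul, ← Finset.sum_mul, hbcol j, one_mul]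
            rw [Finset.sum_congr rfl fun j _ => this j, ← Finset.sum_mul, hsum_q, one_mul]
          rw [e1, e2]
          norm_num
  have hxm2 : ∑ i, ∑ j, (xm i j)^2 ≤ 2 * D := by
    have hterm : ∀ i j, (xm i j)^2
        ≤ 2 * ((t i j)^2 * (p i * (if p i ≤ 0 then 0 else Real.log (p i))
            - p i * (if q j ≤ 0 then 0 else Real.log (q j)) - p i + q j)) := by
      intro i j
      rw [hxm]
      dsimp only
      exact qp_perterm (hp i) (hq j) (fun h => hsupp j h i)
    calc ∑ i, ∑ j, (xm i j)^2
        ≤ ∑ i, ∑ j, 2 * ((t i j)^2 * (p i * (if p i ≤ 0 then 0 else Real.log (p i))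
            - p i * (if q j ≤ 0 then 0 else Real.log (q j)) - p i + q j)) :=
          Finset.sum_le_sum fun i _ => Finset.sum_le_sum fun j _ => hterm i j
      _ = 2 * D := by
          have expand : ∀ i j,
              2 * ((t i j)^2 * (p i * (if p i ≤ 0 then 0 else Real.log (p i))
                - p i * (if q j ≤ 0 then 0 else Real.log (q j)) - p i + q j))
              = 2 * ((t i j)^2 * (p i * (if p i ≤ 0 then 0 else Real.log (p i))))
                - 2 * ((t i j)^2 * (p i * (if q j ≤ 0 then 0 else Real.log (q j))))
                - 2 * ((t i j)^2 * p i) + 2 * ((t i j)^2 * q j) := by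
            intro i j
            ring
          rw [Finset.sum_congr rfl fun i _ => Finset.sum_congr rfl fun j _ => expand i j]
          have hsplit : ∀ (f g : d → d → ℝ),
              (∑ i, ∑ j, (f i j - g i j)) = (∑ i, ∑ j, f i j) - (∑ i, ∑ j, g i j) := by
            intro f g
            rw [← Finset.sum_sub_distrib]
            exact Finset.sum_congr rfl fun i _ => Finset.sum_sub_distrib (f i) (g i)
          have hsplit' : ∀ (f g : d → d → ℝ),
              (∑ i, ∑ j, (f i j + g i j)) = (∑ i, ∑ j, f i j) + (∑ i, ∑ j, g i j) := by
            intro f g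
            rw [← Finset.sum_add_distrib]
            exact Finset.sum_congr rfl fun i _ => Finset.sum_add_distrib
          rw [hsplit' (fun i j => 2 * ((t i j)^2 * (p i * (if p i ≤ 0 then 0 else Real.log (p i))))
                - 2 * ((t i j)^2 * (p i * (if q j ≤ 0 then 0 else Real.log (q j))))
                - 2 * ((t i j)^2 * p i)) (fun i j => 2 * ((t i j)^2 * q j)),
              hsplit (fun i j => 2 * ((t i j)^2 * (p i * (if p i ≤ 0 then 0 else Real.log (p i))))
                - 2 * ((t i j)^2 * (p i * (if q j ≤ 0 then 0 else Real.log (q j)))))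
                (fun i j => 2 * ((t i j)^2 * p i)),
              hsplit (fun i j => 2 * ((t i j)^2 * (p i * (if p i ≤ 0 then 0 else Real.log (p i)))))
                (fun i j => 2 * ((t i j)^2 * (p i * (if q j ≤ 0 then 0 else Real.log (q j)))))]
          have e1 : ∑ i, ∑ j, 2 * ((t i j)^2 * (p i * (if p i ≤ 0 then 0 else Real.log (p i))))
              = 2 * ∑ i, p i * (if p i ≤ 0 then 0 else Real.log (p i)) := by
            rw [Finset.mul_sum]
            refine Finset.sum_congr rfl fun i _ => ?_
            rw [show ∀ c : ℝ, (∑ j, 2 * ((t i j)^2 * c)) = (∑ j, (t i j)^2) * (2*c) from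
              fun c => by rw [Finset.sum_mul]; exact Finset.sum_congr rfl fun j _ => by ring]
            rw [htrow i, one_mul]
          have e2 : ∑ i, ∑ j, 2 * ((t i j)^2 * (p i * (if q j ≤ 0 then 0 else Real.log (q j))))
              = 2 * ∑ i, ∑ j, (t i j)^2 * (p i * (if q j ≤ 0 then 0 else Real.log (q j))) := by
            rw [Finset.mul_sum]
            exact Finset.sum_congr rfl fun i _ => by rw [Finset.mul_sum]
          have e3 : ∑ i, ∑ j, 2 * ((t i j)^2 * p i) = 2 := by
            have : ∀ i, ∑ j, 2 * ((t i j)^2 * p i) = 2 * p i := by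
              intro i
              rw [show ∀ c : ℝ, (∑ j, 2 * ((t i j)^2 * c)) = (∑ j, (t i j)^2) * (2*c) from
                fun c => by rw [Finset.sum_mul]; exact Finset.sum_congr rfl fun j _ => by ring]
              rw [htrow i, one_mul]
            rw [Finset.sum_congr rfl fun i _ => this i, ← Finset.mul_sum, hsum_p, mul_one]
          have e4 : ∑ i, ∑ j, 2 * ((t i j)^2 * q j) = 2 := by
            rw [Finset.sum_comm]
            have : ∀ j, ∑ i, 2 * ((t i j)^2 * q j) = 2 * q j := by
              intro j
              rw [show (∑ i, 2 * ((t i j)^2 * q j)) = (∑ i, (t i j)^2) * (2 * q j) from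
                by rw [Finset.sum_mul]; exact Finset.sum_congr rfl fun i _ => by ring]
              rw [htcol j, one_mul]
            rw [Finset.sum_congr rfl fun j _ => this j, ← Finset.mul_sum, hsum_q, mul_one]
          rw [e1, e2, e3, e4, hD]
          ring
  calc T^2 ≤ (∑ i, ∑ j, xm i j * ym i j)^2 := by
        have hnn : 0 ≤ ∑ i, ∑ j, xm i j * ym i j := hT0.trans hstep1
        exact pow_le_pow_left₀ hT0 hstep1 2
    _ ≤ (∑ i, ∑ j, (xm i j)^2) * (∑ i, ∑ j, (ym i j)^2) := hCS
    _ = ∑ i, ∑ j, (xm i j)^2 := by rw [hym1, mul_one]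
    _ ≤ 2 * D := hxm2


/-- Quantum Pinsker inequality. For density matrices `ρ`, `σ` with
`supp(ρ) ⊆ supp(σ)`, the trace distance satisfies `‖ρ − σ‖₁² ≤ 2·D(ρ‖σ)`
with the natural-logarithm relative entropy (equivalently `‖ρ−σ‖₁² ≤ 2 ln 2 · D₂(ρ‖σ)`
in base 2). -/
theorem quantum_pinsker (ρ σ : Matrix d d ℂ)
    (hρ : ρ.PosSemidef) (hρ1 : ρ.trace = 1)
    (hσ : σ.PosSemidef) (hσ1 : σ.trace = 1)
    (hsupp : SuppSubset ρ σ) :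
    traceNorm (ρ - σ) ^ 2 ≤ 2 * qRelEnt ρ σ := by
  have hρh : ρ.IsHermitian := hρ.1
  have hσh : σ.IsHermitian := hσ.1
  have hΔ : (ρ - σ).IsHermitian := hρh.sub hσh
  set p : d → ℝ := hρh.eigenvalues with hp
  set q : d → ℝ := hσh.eigenvalues with hq
  set lam : d → ℝ := hΔ.eigenvalues with hlam
  set U : Matrix d d ℂ := (hρh.eigenvectorUnitary : Matrix d d ℂ) with hU
  set V : Matrix d d ℂ := (hσh.eigenvectorUnitary : Matrix d d ℂ) with hV
  set W : Matrix d d ℂ := (hΔ.eigenvectorUnitary : Matrix d d ℂ) with hW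
  have hU1 : U * star U = 1 := by
    rw [hU]; exact Matrix.mem_unitaryGroup_iff.mp hρh.eigenvectorUnitary.2
  have hU2 : star U * U = 1 := by
    rw [hU]; exact Matrix.mem_unitaryGroup_iff'.mp hρh.eigenvectorUnitary.2
  have hV1 : V * star V = 1 := by
    rw [hV]; exact Matrix.mem_unitaryGroup_iff.mp hσh.eigenvectorUnitary.2
  have hV2 : star V * V = 1 := by
    rw [hV]; exact Matrix.mem_unitaryGroup_iff'.mp hσh.eigenvectorUnitary.2
  have hW1 : W * star W = 1 := by
    rw [hW]; exact Matrix.mem_unitaryGroup_iff.mp hΔ.eigenvectorUnitary.2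
  have hW2 : star W * W = 1 := by
    rw [hW]; exact Matrix.mem_unitaryGroup_iff'.mp hΔ.eigenvectorUnitary.2
  have hρdec : ρ = U * Matrix.diagonal (fun i => ((p i : ℝ) : ℂ)) * star U := by
    rw [hU, hp]; exact hρh.spectral_theorem
  have hσdec : σ = V * Matrix.diagonal (fun j => ((q j : ℝ) : ℂ)) * star V := by
    rw [hV, hq]; exact hσh.spectral_theorem
  have hΔdec : ρ - σ = W * Matrix.diagonal (fun k => ((lam k : ℝ) : ℂ)) * star W := by
    rw [hW, hlam]; exact hΔ.spectral_theorem
  have hpnn : ∀ i, 0 ≤ p i := by rw [hp]; exact fun i => hρ.eigenvalues_nonneg i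
  have hqnn : ∀ j, 0 ≤ q j := by rw [hq]; exact fun j => hσ.eigenvalues_nonneg j
  -- the sign unitary of ρ - σ
  set S : Matrix d d ℂ := mfun (fun x => if x < 0 then (-1:ℝ) else 1) (ρ - σ) with hS
  have hSdec : S = W * Matrix.diagonal
      (fun k => ((if lam k < 0 then (-1:ℝ) else 1 : ℝ) : ℂ)) * star W := by
    rw [hS, hW, hlam]
    unfold mfun
    rw [dif_pos hΔ]
  have hSst : star S = S := by
    rw [hSdec]
    have hDst : star (Matrix.diagonal (fun k => ((if lam k < 0 then (-1:ℝ) else 1 : ℝ) : ℂ)))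
        = Matrix.diagonal (fun k => ((if lam k < 0 then (-1:ℝ) else 1 : ℝ) : ℂ)) := by
      ext k l
      rcases eq_or_ne k l with hkl | hkl
      · simp [Matrix.star_apply, Matrix.diagonal_apply, hkl, Complex.conj_ofReal]
      · have hlk : l ≠ k := hkl.symm
        simp [Matrix.star_apply, Matrix.diagonal_apply, hkl, hlk]
    simp only [Matrix.star_mul, star_star, hDst, Matrix.mul_assoc]
  have hSS : S * S = 1 := by
    rw [hSdec, qp_conj_mul_conj W hW2]
    have hone : (fun k => ((if lam k < 0 then (-1:ℝ) else 1 : ℝ) : ℂ)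
        * ((if lam k < 0 then (-1:ℝ) else 1 : ℝ) : ℂ)) = fun _ => (1:ℂ) := by
      funext k
      rw [← Complex.ofReal_mul]
      norm_cast
      split_ifs <;> decide
    rw [hone, Matrix.diagonal_one, Matrix.mul_one, hW1]
  -- Gram matrices
  have hαst : star (star U * V) = star V * U := by rw [Matrix.star_mul, star_star]
  have hβst : star (star U * S * V) = star V * S * U := by
    simp only [Matrix.star_mul, star_star, hSst, Matrix.mul_assoc]
  have hα1 : (star U * V) * star (star U * V) = 1 := by
    rw [hαst]
    calc (star U * V) * (star V * U) = star U * ((V * star V) * U) := by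
          simp only [Matrix.mul_assoc]
      _ = 1 := by rw [hV1, Matrix.one_mul, hU2]
  have hα2 : star (star U * V) * (star U * V) = 1 := by
    rw [hαst]
    calc (star V * U) * (star U * V) = star V * ((U * star U) * V) := by
          simp only [Matrix.mul_assoc]
      _ = 1 := by rw [hU1, Matrix.one_mul, hV2]
  have hβ1 : (star U * S * V) * star (star U * S * V) = 1 := by
    rw [hβst]
    calc (star U * S * V) * (star V * S * U)
        = star U * (S * ((V * star V) * (S * U))) := by simp only [Matrix.mul_assoc]
      _ = star U * (S * (S * U)) := by rw [hV1, Matrix.one_mul]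
      _ = star U * ((S * S) * U) := by rw [Matrix.mul_assoc]
      _ = 1 := by rw [hSS, Matrix.one_mul, hU2]
  have hβ2 : star (star U * S * V) * (star U * S * V) = 1 := by
    rw [hβst]
    calc (star V * S * U) * (star U * S * V)
        = star V * (S * ((U * star U) * (S * V))) := by simp only [Matrix.mul_assoc]
      _ = star V * (S * (S * V)) := by rw [hU1, Matrix.one_mul]
      _ = star V * ((S * S) * V) := by rw [Matrix.mul_assoc]
      _ = 1 := by rw [hSS, Matrix.one_mul, hV2]
  -- sums of eigenvalues
  have hsum_p : ∑ i, p i = 1 := by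
    have h1 : ρ.trace = ∑ i, ((p i : ℝ) : ℂ) := by
      conv_lhs => rw [hρdec]
      exact qp_trace_conj U hU2 _
    rw [hρ1, ← Complex.ofReal_sum] at h1
    exact_mod_cast h1.symm
  have hsum_q : ∑ j, q j = 1 := by
    have h1 : σ.trace = ∑ j, ((q j : ℝ) : ℂ) := by
      conv_lhs => rw [hσdec]
      exact qp_trace_conj V hV2 _
    rw [hσ1, ← Complex.ofReal_sum] at h1
    exact_mod_cast h1.symm
  -- the trace norm
  have hTN : traceNorm (ρ - σ) = ∑ k, |lam k| := by
    unfold traceNorm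
    have habs : mfun (fun x => |x|) (ρ - σ)
        = W * Matrix.diagonal (fun k => ((|lam k| : ℝ) : ℂ)) * star W := by
      rw [hW, hlam]
      unfold mfun
      rw [dif_pos hΔ]
    rw [habs, qp_trace_conj W hW2, ← Complex.ofReal_sum, Complex.ofReal_re]
  -- relative entropy as a double sum
  have hlogρdec : logm ρ = U * Matrix.diagonal
      (fun i => ((if p i ≤ 0 then 0 else Real.log (p i) : ℝ) : ℂ)) * star U := by
    rw [hU, hp]
    unfold logm mfun
    rw [dif_pos hρh]
  have hlogσdec : logm σ = V * Matrix.diagonal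
      (fun j => ((if q j ≤ 0 then 0 else Real.log (q j) : ℝ) : ℂ)) * star V := by
    rw [hV, hq]
    unfold logm mfun
    rw [dif_pos hσh]
  have hC1 : (ρ * logm ρ).trace
      = ∑ i, ((p i * (if p i ≤ 0 then 0 else Real.log (p i)) : ℝ) : ℂ) := by
    rw [hlogρdec]
    conv_lhs => rw [hρdec]
    rw [qp_conj_mul_conj U hU2, qp_trace_conj U hU2]
    push_cast
    rfl
  have hC2 : (ρ * logm σ).trace
      = ∑ i, ∑ j, ((p i * (if q j ≤ 0 then 0 else Real.log (q j))
          * ‖(star U * V) i j‖^2 : ℝ) : ℂ) := by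
    rw [hlogσdec]
    conv_lhs => rw [hρdec]
    rw [qp_trace_conj_mul U V _ hV1]
    refine Finset.sum_congr rfl fun i _ => Finset.sum_congr rfl fun j _ => ?_
    have hmid : star U * (V * Matrix.diagonal
        (fun j => ((if q j ≤ 0 then 0 else Real.log (q j) : ℝ) : ℂ)) * star V) * V
        = (star U * V) * Matrix.diagonal
          (fun j => ((if q j ≤ 0 then 0 else Real.log (q j) : ℝ) : ℂ)) := by
      calc star U * (V * Matrix.diagonal
          (fun j => ((if q j ≤ 0 then 0 else Real.log (q j) : ℝ) : ℂ)) * star V) * V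
          = (star U * V) * (Matrix.diagonal
            (fun j => ((if q j ≤ 0 then 0 else Real.log (q j) : ℝ) : ℂ)) * (star V * V)) := by
            simp only [Matrix.mul_assoc]
        _ = _ := by rw [hV2, Matrix.mul_one]
    rw [hmid, Matrix.mul_diagonal]
    rw [show star V * U = star (star U * V) from hαst.symm, Matrix.star_apply]
    have hcc : (star U * V) i j * star ((star U * V) i j)
        = ((‖(star U * V) i j‖^2 : ℝ) : ℂ) := by
      rw [RCLike.star_def, RCLike.mul_conj]
      norm_cast
    calc ((p i : ℝ) : ℂ) * ((star U * V) i j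
          * ((if q j ≤ 0 then 0 else Real.log (q j) : ℝ) : ℂ) * star ((star U * V) i j))
        = ((p i : ℝ) : ℂ) * ((if q j ≤ 0 then 0 else Real.log (q j) : ℝ) : ℂ)
          * ((star U * V) i j * star ((star U * V) i j)) := by ring
      _ = _ := by
          rw [hcc]
          push_cast
          ring
  have hD : qRelEnt ρ σ = ∑ i, p i * (if p i ≤ 0 then 0 else Real.log (p i))
      - ∑ i, ∑ j, (‖(star U * V) i j‖)^2
          * (p i * (if q j ≤ 0 then 0 else Real.log (q j))) := by
    unfold qRelEnt
    rw [Matrix.mul_sub, Matrix.trace_sub, Complex.sub_re, hC1, hC2]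
    rw [← Complex.ofReal_sum, Complex.ofReal_re]
    have h2 : ∑ i, ∑ j, ((p i * (if q j ≤ 0 then 0 else Real.log (q j))
        * ‖(star U * V) i j‖^2 : ℝ) : ℂ)
        = ((∑ i, ∑ j, p i * (if q j ≤ 0 then 0 else Real.log (q j))
          * ‖(star U * V) i j‖^2 : ℝ) : ℂ) := by
      push_cast
      rfl
    rw [h2, Complex.ofReal_re]
    congr 1
    refine Finset.sum_congr rfl fun i _ => Finset.sum_congr rfl fun j _ => by ring
  -- support condition
  have hsupp' : ∀ j, q j = 0 → ∀ i, p i * (‖(star U * V) i j‖)^2 = 0 := by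
    intro j hqj
    have hσV : σ * V = V * Matrix.diagonal (fun j => ((q j : ℝ) : ℂ)) := by
      conv_lhs => rw [hσdec]
      calc V * Matrix.diagonal (fun j => ((q j : ℝ) : ℂ)) * star V * V
          = V * Matrix.diagonal (fun j => ((q j : ℝ) : ℂ)) * (star V * V) := by
            rw [Matrix.mul_assoc]
        _ = _ := by rw [hV2, Matrix.mul_one]
    have hv : σ.mulVec (fun k => V k j) = 0 := by
      funext k
      have h1 : σ.mulVec (fun l => V l j) k = (σ * V) k j := by
        rw [Matrix.mul_apply]
        rfl
      rw [Pi.zero_apply, h1, hσV, Matrix.mul_diagonal, hqj]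
      simp
    have hρv := hsupp _ hv
    have hkey : star V * (ρ * V) = star (star U * V)
        * (Matrix.diagonal (fun i => ((p i : ℝ) : ℂ)) * (star U * V)) := by
      rw [hαst]
      conv_lhs => rw [hρdec]
      simp only [Matrix.mul_assoc]
    have hjj := congrFun (congrFun hkey j) j
    have hL : (star V * (ρ * V)) j j = 0 := by
      rw [Matrix.mul_apply]
      apply Finset.sum_eq_zero
      intro k _
      have h0 : (ρ * V) k j = 0 := by
        have := congrFun hρv k
        rw [Pi.zero_apply] at this
        rw [Matrix.mul_apply]
        simpa [Matrix.mulVec, dotProduct] using this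
      rw [h0, mul_zero]
    rw [hL, Matrix.mul_apply] at hjj
    have hterm : ∀ i, (star (star U * V)) j i
        * (Matrix.diagonal (fun i => ((p i : ℝ) : ℂ)) * (star U * V)) i j
        = ((p i * ‖(star U * V) i j‖^2 : ℝ) : ℂ) := by
      intro i
      rw [Matrix.star_apply, Matrix.diagonal_mul]
      have hcc : (star U * V) i j * star ((star U * V) i j)
          = ((‖(star U * V) i j‖^2 : ℝ) : ℂ) := by
        rw [RCLike.star_def, RCLike.mul_conj]
        norm_cast
      calc star ((star U * V) i j) * (((p i : ℝ) : ℂ) * (star U * V) i j)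
          = ((p i : ℝ) : ℂ) * ((star U * V) i j * star ((star U * V) i j)) := by ring
        _ = _ := by rw [hcc]; push_cast; ring
    rw [Finset.sum_congr rfl (fun i _ => hterm i), ← Complex.ofReal_sum] at hjj
    have h3 : ∑ i, p i * ‖(star U * V) i j‖^2 = 0 := by exact_mod_cast hjj.symm
    intro i
    have hnn : ∀ i ∈ Finset.univ, (0:ℝ) ≤ p i * ‖(star U * V) i j‖^2 :=
      fun i _ => mul_nonneg (hpnn i) (by positivity)
    exact (Finset.sum_eq_zero_iff_of_nonneg hnn).mp h3 i (Finset.mem_univ i)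
  -- trace-norm identity via the sign unitary
  have hρS : ((ρ * S).trace).re
      = ∑ i, ∑ j, p i * ((star U * S * V) i j * star ((star U * V) i j)).re := by
    have h1 : (ρ * S).trace = ∑ i, ∑ j, ((p i : ℝ) : ℂ)
        * ((star U * S * V) i j * star ((star U * V) i j)) := by
      conv_lhs => rw [hρdec]
      rw [qp_trace_conj_mul U V S hV1]
      refine Finset.sum_congr rfl fun i _ => Finset.sum_congr rfl fun j _ => ?_
      rw [show star V * U = star (star U * V) from hαst.symm, Matrix.star_apply]
    rw [h1, Complex.re_sum]
    refine Finset.sum_congr rfl fun i _ => ?_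
    rw [Complex.re_sum]
    exact Finset.sum_congr rfl fun j _ => Complex.re_ofReal_mul _ _
  have hσS : ((σ * S).trace).re
      = ∑ j, ∑ i, q j * ((star U * S * V) i j * star ((star U * V) i j)).re := by
    have h1 : (σ * S).trace = ∑ j, ∑ i, ((q j : ℝ) : ℂ)
        * ((star V * S * U) j i * ((star U * V) i j)) := by
      conv_lhs => rw [hσdec]
      rw [qp_trace_conj_mul V U S hU1]
    rw [h1, Complex.re_sum]
    refine Finset.sum_congr rfl fun j _ => ?_
    rw [Complex.re_sum]
    refine Finset.sum_congr rfl fun i _ => ?_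
    rw [Complex.re_ofReal_mul]
    congr 1
    rw [show star V * S * U = star (star U * S * V) from hβst.symm, Matrix.star_apply]
    have hsw : star ((star U * S * V) i j) * ((star U * V) i j)
        = star ((star U * S * V) i j * star ((star U * V) i j)) := by
      rw [StarMul.star_mul, star_star]
      ring
    rw [hsw]
    simp
  have hΔS : (((ρ - σ) * S).trace).re = ∑ k, |lam k| := by
    have h1 : ((ρ - σ) * S).trace = ∑ k, ((|lam k| : ℝ) : ℂ) := by
      rw [hΔdec, hSdec, qp_conj_mul_conj W hW2, qp_trace_conj W hW2]
      refine Finset.sum_congr rfl fun k _ => ?_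
      rw [← Complex.ofReal_mul]
      rcases lt_or_ge (lam k) 0 with h | h
      · rw [if_pos h, abs_of_neg h]; push_cast; ring
      · rw [if_neg (not_lt.mpr h), abs_of_nonneg h]; push_cast; ring
    rw [h1, ← Complex.ofReal_sum, Complex.ofReal_re]
  have hT : ∑ k, |lam k| = ∑ i, ∑ j, (p i - q j)
      * ((star U * S * V) i j * star ((star U * V) i j)).re := by
    have hsub : ((ρ - σ) * S).trace = (ρ * S).trace - (σ * S).trace := by
      rw [Matrix.sub_mul, Matrix.trace_sub]
    calc ∑ k, |lam k| = (((ρ - σ) * S).trace).re := hΔS.symm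
      _ = ((ρ * S).trace).re - ((σ * S).trace).re := by rw [hsub, Complex.sub_re]
      _ = (∑ i, ∑ j, p i * ((star U * S * V) i j * star ((star U * V) i j)).re)
          - (∑ j, ∑ i, q j * ((star U * S * V) i j * star ((star U * V) i j)).re) := by
          rw [hρS, hσS]
      _ = (∑ i, ∑ j, p i * ((star U * S * V) i j * star ((star U * V) i j)).re)
          - (∑ i, ∑ j, q j * ((star U * S * V) i j * star ((star U * V) i j)).re) := by
          congr 1
          exact Finset.sum_comm
      _ = ∑ i, ∑ j, (p i - q j)
          * ((star U * S * V) i j * star ((star U * V) i j)).re := by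
          rw [← Finset.sum_sub_distrib]
          refine Finset.sum_congr rfl fun i _ => ?_
          rw [← Finset.sum_sub_distrib]
          exact Finset.sum_congr rfl fun j _ => by ring
  -- apply the classical lemma
  have hr : ∀ i j, |((star U * S * V) i j * star ((star U * V) i j)).re|
      ≤ ‖(star U * V) i j‖ * ‖(star U * S * V) i j‖ := by
    intro i j
    calc |((star U * S * V) i j * star ((star U * V) i j)).re|
        ≤ ‖(star U * S * V) i j * star ((star U * V) i j)‖ := Complex.abs_re_le_norm _
      _ = ‖(star U * S * V) i j‖ * ‖(star U * V) i j‖ := by rw [norm_mul, norm_star]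
      _ = ‖(star U * V) i j‖ * ‖(star U * S * V) i j‖ := mul_comm _ _
  have hT0 : (0:ℝ) ≤ ∑ k, |lam k| := Finset.sum_nonneg fun k _ => abs_nonneg _
  rw [hTN]
  exact qp_classical p q (fun i j => ‖(star U * V) i j‖)
    (fun i j => ‖(star U * S * V) i j‖)
    (fun i j => ((star U * S * V) i j * star ((star U * V) i j)).re)
    (∑ k, |lam k|) (qRelEnt ρ σ)
    hpnn hqnn hsum_p hsum_q
    (fun i => qp_row_norm_sum hα1 i) (fun j => qp_col_norm_sum hα2 j)
    (fun i => qp_row_norm_sum hβ1 i) (fun j => qp_col_norm_sum hβ2 j)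
    hsupp' hr hT0 hT hD
end

section
/- In the binary hypothesis test between two equiprobable pure states |ψ⟩ and |φ⟩, the minimum average error probability over all two-outcome POVMs is (1 − √(1 − |⟨ψ|φ⟩|²))/2. -/
open Matrix
open scoped ComplexOrder

variable {d : Type*} [Fintype d] [DecidableEq d]

set_option linter.unusedSectionVars false

lemma outer_mulVec (v x : d → ℂ) :
    (vecMulVec v (star v)) *ᵥ x = (star v ⬝ᵥ x) • v := by
  ext i
  simp only [vecMulVec, mulVec, dotProduct, of_apply, Pi.star_apply, Pi.smul_apply,
    smul_eq_mul, Finset.sum_mul, Finset.mul_sum]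
  exact Finset.sum_congr rfl fun j _ => by ring

lemma dot_star_comm (v x : d → ℂ) : star x ⬝ᵥ v = star (star v ⬝ᵥ x) := by
  simp only [dotProduct, star_sum, Pi.star_apply, star_mul', star_star]
  exact Finset.sum_congr rfl fun j _ => by ring

lemma outer_quad (r : ℝ) (v x : d → ℂ) :
    star x ⬝ᵥ (((r : ℂ) • vecMulVec v (star v)) *ᵥ x)
      = (r : ℂ) * (star (star v ⬝ᵥ x) * (star v ⬝ᵥ x)) := by
  have h := dot_star_comm v x
  rw [smul_mulVec, dotProduct_smul, outer_mulVec, dotProduct_smul, smul_eq_mul,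
    smul_eq_mul, h]
  ring

lemma outer_psd (r : ℝ) (hr : 0 ≤ r) (v : d → ℂ) :
    ((r : ℂ) • vecMulVec v (star v)).PosSemidef := by
  rw [posSemidef_iff_dotProduct_mulVec]
  constructor
  · unfold IsHermitian
    rw [conjTranspose_smul]
    congr 1
    · simp
    · ext i j; simp [vecMulVec, conjTranspose_apply, mul_comm]
  · intro x
    rw [outer_quad]
    exact mul_nonneg (by exact_mod_cast hr) (star_mul_self_nonneg _)

lemma dot_eq_inner (x y : EuclideanSpace ℂ d) :
    (star (fun i => x i)) ⬝ᵥ (fun i => y i) = (inner ℂ x y : ℂ) := by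
  simp [dotProduct, PiLp.inner_apply, Pi.star_apply, RCLike.inner_apply, RCLike.star_def, mul_comm]

-- Cauchy-Schwarz glue
lemma cs_glue (v x : d → ℂ) :
    Complex.normSq (star v ⬝ᵥ x) ≤ (star v ⬝ᵥ v).re * (star x ⬝ᵥ x).re := by
  let v' : EuclideanSpace ℂ d := WithLp.toLp 2 v
  let x' : EuclideanSpace ℂ d := WithLp.toLp 2 x
  have h1 : star v ⬝ᵥ x = (inner ℂ v' x' : ℂ) := dot_eq_inner v' x'
  have h2 : star v ⬝ᵥ v = (inner ℂ v' v' : ℂ) := dot_eq_inner v' v'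
  have h3 : star x ⬝ᵥ x = (inner ℂ x' x' : ℂ) := dot_eq_inner x' x'
  have h4 : Complex.normSq (inner ℂ v' x' : ℂ) = ‖(inner ℂ v' x' : ℂ)‖ ^ 2 := by
    rw [Complex.normSq_eq_norm_sq]
  have this' := norm_inner_le_norm (𝕜 := ℂ) v' x'
  have h5 : ‖(inner ℂ v' x' : ℂ)‖ ^ 2 ≤ ‖v'‖ ^ 2 * ‖x'‖ ^ 2 := by
    calc ‖(inner ℂ v' x' : ℂ)‖ ^ 2 ≤ (‖v'‖ * ‖x'‖) ^ 2 :=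
          pow_le_pow_left₀ (norm_nonneg _) this' 2
      _ = ‖v'‖ ^ 2 * ‖x'‖ ^ 2 := by ring
  have hv : (inner ℂ v' v' : ℂ).re = ‖v'‖ ^ 2 := by
    have := inner_self_eq_norm_sq (𝕜 := ℂ) v'
    simpa using this
  have hx : (inner ℂ x' x' : ℂ).re = ‖x'‖ ^ 2 := by
    have := inner_self_eq_norm_sq (𝕜 := ℂ) x'
    simpa using this
  rw [h1, h2, h3, h4, hv, hx]
  exact h5

lemma self_dot (x : d → ℂ) :
    star x ⬝ᵥ x = ((∑ i, Complex.normSq (x i) : ℝ) : ℂ) := by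
  push_cast
  simp only [dotProduct, Pi.star_apply, RCLike.star_def]
  exact Finset.sum_congr rfl fun i _ => by
    rw [mul_comm, Complex.mul_conj]

lemma self_dot_re (x : d → ℂ) :
    (star x ⬝ᵥ x).re = ∑ i, Complex.normSq (x i) := by
  rw [self_dot]; exact Complex.ofReal_re _

lemma one_sub_outer_psd (r : ℝ) (hr : 0 ≤ r) (v : d → ℂ)
    (hv : r * (∑ i, Complex.normSq (v i)) ≤ 1) :
    (1 - (r : ℂ) • vecMulVec v (star v)).PosSemidef := by
  rw [posSemidef_iff_dotProduct_mulVec]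
  constructor
  · have h := (outer_psd r hr v).1
    unfold IsHermitian at *
    rw [conjTranspose_sub, h, conjTranspose_one]
  · intro x
    rw [sub_mulVec, dotProduct_sub, one_mulVec, outer_quad]
    have hw : star (star v ⬝ᵥ x) * (star v ⬝ᵥ x) = ((Complex.normSq (star v ⬝ᵥ x) : ℝ) : ℂ) := by
      rw [Complex.star_def, mul_comm, Complex.mul_conj]
    rw [hw, self_dot]
    have key : r * Complex.normSq (star v ⬝ᵥ x) ≤ ∑ i, Complex.normSq (x i) := by
      have h1 := cs_glue v x
      rw [self_dot_re, self_dot_re] at h1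
      calc r * Complex.normSq (star v ⬝ᵥ x)
          ≤ r * ((∑ i, Complex.normSq (v i)) * (∑ i, Complex.normSq (x i))) :=
            mul_le_mul_of_nonneg_left h1 hr
        _ = (r * (∑ i, Complex.normSq (v i))) * (∑ i, Complex.normSq (x i)) := by ring
        _ ≤ 1 * (∑ i, Complex.normSq (x i)) := by
            apply mul_le_mul_of_nonneg_right hv
            exact Finset.sum_nonneg fun i _ => Complex.normSq_nonneg _
        _ = ∑ i, Complex.normSq (x i) := one_mul _
    have : (0:ℂ) ≤ ((((∑ i, Complex.normSq (x i)) - r * Complex.normSq (star v ⬝ᵥ x) : ℝ)) : ℂ) := by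
      rw [Complex.zero_le_real]
      linarith
    convert this using 1
    push_cast
    ring

lemma quad_expand (P : Matrix d d ℂ) (x y : d → ℂ) (α β : ℂ) :
    star (α • x + β • y) ⬝ᵥ (P *ᵥ (α • x + β • y)) =
      star α * α * (star x ⬝ᵥ (P *ᵥ x)) + star α * β * (star x ⬝ᵥ (P *ᵥ y))
      + star β * α * (star y ⬝ᵥ (P *ᵥ x)) + star β * β * (star y ⬝ᵥ (P *ᵥ y)) := by
  simp [mulVec_add, mulVec_smul, dotProduct_add, dotProduct_smul, star_add, star_smul,
    add_dotProduct, smul_dotProduct, smul_eq_mul]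
  ring

lemma star_lin_dot (x y z : d → ℂ) (α β : ℂ) :
    star (α • x + β • y) ⬝ᵥ z = star α * (star x ⬝ᵥ z) + star β * (star y ⬝ᵥ z) := by
  simp [star_add, star_smul, add_dotProduct, smul_dotProduct, smul_eq_mul]


/-- Helstrom bound for equiprobable pure states. The minimum average error
probability over all two-outcome POVMs `(Π, I−Π)` for distinguishing equiprobable pure
states `ψ` and `φ` is `(1 − √(1 − |⟨ψ|φ⟩|²))/2`, where the average error probability of
`(Π, I−Π)` is `(1/2)(1 − ⟨ψ|Π|ψ⟩) + (1/2)⟨φ|Π|φ⟩`. -/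
theorem helstrom_pure_states (ψ φ : EuclideanSpace ℂ d)
    (hψ : ‖ψ‖ = 1) (hφ : ‖φ‖ = 1) :
    IsLeast
      { e : ℝ | ∃ P : Matrix d d ℂ, P.PosSemidef ∧ (1 - P).PosSemidef ∧
          e = (1 / 2) * (1 - (dotProduct (fun i => star (ψ i))
                  (P.mulVec fun i => ψ i)).re)
            + (1 / 2) * (dotProduct (fun i => star (φ i))
                  (P.mulVec fun i => φ i)).re }
      ((1 - Real.sqrt (1 - ‖(inner ℂ ψ φ : ℂ)‖ ^ 2)) / 2) := by
  classical
  set c : ℂ := (inner ℂ ψ φ : ℂ) with hc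
  set s : ℝ := Real.sqrt (1 - ‖c‖ ^ 2) with hsdef
  set ψf : d → ℂ := fun i => ψ i with hψf
  set φf : d → ℂ := fun i => φ i with hφf
  -- basic facts
  have hcle : ‖c‖ ≤ 1 := by
    have := norm_inner_le_norm (𝕜 := ℂ) ψ φ
    rwa [hψ, hφ, one_mul] at this
  have h1c : 0 ≤ 1 - ‖c‖ ^ 2 := by nlinarith [norm_nonneg c]
  have hs0 : 0 ≤ s := Real.sqrt_nonneg _
  have hs2 : s ^ 2 = 1 - ‖c‖ ^ 2 := Real.sq_sqrt h1c
  have hcc : c * (starRingEnd ℂ) c = ((1 - s ^ 2 : ℝ) : ℂ) := by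
    rw [Complex.mul_conj, hs2]
    norm_cast
    rw [Complex.normSq_eq_norm_sq]
    ring
  have hψψ : star ψf ⬝ᵥ ψf = 1 := by
    rw [hψf, dot_eq_inner ψ ψ, inner_self_eq_norm_sq_to_K (𝕜 := ℂ), hψ]
    norm_num
  have hφφ : star φf ⬝ᵥ φf = 1 := by
    rw [hφf, dot_eq_inner φ φ, inner_self_eq_norm_sq_to_K (𝕜 := ℂ), hφ]
    norm_num
  have hψφ : star ψf ⬝ᵥ φf = c := dot_eq_inner ψ φ
  have hφψ : star φf ⬝ᵥ ψf = (starRingEnd ℂ) c := by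
    rw [hφf, hψf, dot_eq_inner φ ψ, hc, ← inner_conj_symm]
  have hstψ : (fun i => star (ψ i)) = star ψf := rfl
  have hstφ : (fun i => star (φ i)) = star φf := rfl
  constructor
  · -- membership
    by_cases hs : s = 0
    · refine ⟨((1:ℝ):ℂ) • vecMulVec ψf (star ψf), outer_psd 1 zero_le_one ψf,
        one_sub_outer_psd 1 zero_le_one ψf ?_, ?_⟩
      · rw [← self_dot_re, hψψ]
        norm_num
      · rw [hstψ, hstφ]
        show (1 - s)/2 = 1/2 * (1 - (star ψf ⬝ᵥ (((1:ℝ):ℂ) • vecMulVec ψf (star ψf)) *ᵥ ψf).re)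
            + 1/2 * ((star φf ⬝ᵥ (((1:ℝ):ℂ) • vecMulVec ψf (star ψf)) *ᵥ φf).re)
        rw [outer_quad, outer_quad, hψψ, hψφ]
        have h2 : ((1:ℝ):ℂ) * (star c * c) = ((1 - s^2 : ℝ):ℂ) := by
          rw [Complex.star_def]
          push_cast
          push_cast at hcc
          linear_combination hcc
        rw [h2]
        norm_num [hs]
    · have hspos : 0 < s := lt_of_le_of_ne hs0 (Ne.symm hs)
      have h1s : (0:ℝ) < 1 + s := by linarith
      set a : ℂ := ((1 + s : ℝ):ℂ) with hadef
      set V : d → ℂ := a • ψf + (-((starRingEnd ℂ) c)) • φf with hVdef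
      set r : ℝ := (2*s^2*(1+s))⁻¹ with hrdef
      have hr0 : (0:ℝ) ≤ r := by positivity
      have hVψ : star V ⬝ᵥ ψf = ((s + s^2 : ℝ):ℂ) := by
        rw [hVdef, star_lin_dot, hψψ, hφψ]
        simp only [star_neg, star_star, hadef, Complex.star_def, Complex.conj_conj, Complex.conj_ofReal]
        push_cast
        push_cast at hcc
        linear_combination -hcc
      have hVφ : star V ⬝ᵥ φf = c * (s:ℂ) := by
        rw [hVdef, star_lin_dot, hψφ, hφφ]
        simp only [star_neg, star_star, hadef, Complex.star_def, Complex.conj_conj, Complex.conj_ofReal]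
        push_cast
        ring
      have hVV : star V ⬝ᵥ V = ((2*s^2*(1+s) : ℝ):ℂ) := by
        conv_lhs => rw [hVdef]
        rw [dotProduct_add, dotProduct_smul, dotProduct_smul, hVψ, hVφ, smul_eq_mul,
          smul_eq_mul, hadef]
        push_cast
        push_cast at hcc
        linear_combination (-(s:ℂ)) * hcc
      refine ⟨(r:ℂ) • vecMulVec V (star V), outer_psd r hr0 V,
        one_sub_outer_psd r hr0 V ?_, ?_⟩
      · rw [← self_dot_re, hVV, Complex.ofReal_re, hrdef]
        rw [inv_mul_cancel₀ (by positivity)]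
      · rw [hstψ, hstφ]
        show (1 - s)/2 = 1/2 * (1 - (star ψf ⬝ᵥ ((r:ℂ) • vecMulVec V (star V)) *ᵥ ψf).re)
            + 1/2 * ((star φf ⬝ᵥ ((r:ℂ) • vecMulVec V (star V)) *ᵥ φf).re)
        rw [outer_quad, outer_quad, hVψ, hVφ]
        have e1 : (r:ℂ) * (star ((s + s^2 : ℝ):ℂ) * ((s + s^2 : ℝ):ℂ))
            = ((r * (s + s^2)^2 : ℝ):ℂ) := by
          simp only [Complex.star_def, Complex.conj_ofReal]
          push_cast
          ring
        have e2 : (r:ℂ) * (star (c * (s:ℂ)) * (c * (s:ℂ)))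
            = ((r * s^2 * (1 - s^2) : ℝ):ℂ) := by
          simp only [star_mul', Complex.star_def, Complex.conj_ofReal]
          push_cast
          push_cast at hcc
          linear_combination ((r:ℂ) * (s:ℂ)^2) * hcc
        rw [e1, e2, Complex.ofReal_re, Complex.ofReal_re, hrdef]
        field_simp
        ring
  · -- lower bound
    rintro e ⟨P, hP, hQ, he⟩
    rw [hstψ, hstφ] at he
    suffices h : (star ψf ⬝ᵥ (P *ᵥ ψf)).re - (star φf ⬝ᵥ (P *ᵥ φf)).re ≤ s by
      rw [he]
      linarith
    by_cases hs : s = 0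
    · have hψ0 : ψ ≠ 0 := fun h => by simp [h] at hψ
      have hφ0 : φ ≠ 0 := fun h => by simp [h] at hφ
      have hnc : ‖c‖ = 1 := by
        have h2 : 1 - ‖c‖^2 = 0 := by
          by_contra h3
          have h4 : 0 < 1 - ‖c‖^2 := lt_of_le_of_ne h1c (Ne.symm h3)
          have := Real.sqrt_pos.mpr h4
          rw [← hsdef] at this
          linarith [this, hs.le]
        nlinarith [norm_nonneg c]
      obtain ⟨rr, -, hrr⟩ := (norm_inner_eq_norm_iff (𝕜 := ℂ) hψ0 hφ0).mp
        (by rw [← hc, hnc, hψ, hφ]; norm_num)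
      have hrc : rr = c := by
        rw [hc, hrr, inner_smul_right, inner_self_eq_norm_sq_to_K (𝕜 := ℂ), hψ]
        norm_num
      have hφfc : φf = c • ψf := by
        rw [hφf, hrr, hrc]
        rfl
      have hBeq : star φf ⬝ᵥ (P *ᵥ φf) = ((starRingEnd ℂ) c * c) * (star ψf ⬝ᵥ (P *ᵥ ψf)) := by
        rw [hφfc, mulVec_smul, star_smul, smul_dotProduct, dotProduct_smul, smul_eq_mul,
          smul_eq_mul, Complex.star_def]
        ring
      have hcc1 : (starRingEnd ℂ) c * c = 1 := by
        rw [mul_comm, hcc, hs]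
        norm_num
      rw [hBeq, hcc1, one_mul, hs]
      simp
    · have hspos : 0 < s := lt_of_le_of_ne hs0 (Ne.symm hs)
      have h1s : (0:ℝ) < 1 + s := by linarith
      set a : ℂ := ((1 + s : ℝ):ℂ) with hadef
      set V : d → ℂ := a • ψf + (-((starRingEnd ℂ) c)) • φf with hVdef
      set W : d → ℂ := a • φf + (-c) • ψf with hWdef
      have hVψ : star V ⬝ᵥ ψf = ((s + s^2 : ℝ):ℂ) := by
        rw [hVdef, star_lin_dot, hψψ, hφψ]
        simp only [star_neg, star_star, hadef, Complex.star_def, Complex.conj_conj, Complex.conj_ofReal]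
        push_cast
        push_cast at hcc
        linear_combination -hcc
      have hVφ : star V ⬝ᵥ φf = c * (s:ℂ) := by
        rw [hVdef, star_lin_dot, hψφ, hφφ]
        simp only [star_neg, star_star, hadef, Complex.star_def, Complex.conj_conj, Complex.conj_ofReal]
        push_cast
        ring
      have hVV : star V ⬝ᵥ V = ((2*s^2*(1+s) : ℝ):ℂ) := by
        conv_lhs => rw [hVdef]
        rw [dotProduct_add, dotProduct_smul, dotProduct_smul, hVψ, hVφ, smul_eq_mul,
          smul_eq_mul, hadef]
        push_cast
        push_cast at hcc
        linear_combination (-(s:ℂ)) * hcc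
      have hkey : star V ⬝ᵥ (P *ᵥ V) - star W ⬝ᵥ (P *ᵥ W)
          = ((2*s + 2*s^2 : ℝ):ℂ) * ((star ψf ⬝ᵥ (P *ᵥ ψf)) - (star φf ⬝ᵥ (P *ᵥ φf))) := by
        rw [hVdef, hWdef, quad_expand, quad_expand]
        simp only [star_neg, star_star, hadef, Complex.star_def, Complex.conj_conj, Complex.conj_ofReal]
        push_cast
        push_cast at hcc
        linear_combination (-((star ψf ⬝ᵥ (P *ᵥ ψf)) - (star φf ⬝ᵥ (P *ᵥ φf)))) * hcc
      have hQV : (star V ⬝ᵥ (P *ᵥ V)).re ≤ 2*s^2*(1+s) := by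
        have h0 := (Complex.le_def.mp (hQ.dotProduct_mulVec_nonneg V)).1
        rw [sub_mulVec, one_mulVec, dotProduct_sub, Complex.sub_re, hVV,
          Complex.ofReal_re] at h0
        simp only [Complex.zero_re] at h0
        linarith
      have hQW : 0 ≤ (star W ⬝ᵥ (P *ᵥ W)).re := by
        have h0 := (Complex.le_def.mp (hP.dotProduct_mulVec_nonneg W)).1
        simpa using h0
      have hre := congrArg Complex.re hkey
      rw [Complex.sub_re, Complex.re_ofReal_mul, Complex.sub_re] at hre
      nlinarith [hre, hQV, hQW, hspos]
end
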